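/- arXiv:2509.02436 — 4 statements merged into one kernel-verified Lean document; each statement's English description precedes it below -/
import Mathlib

section
/- Let p be an odd prime with Property C (i.e., every sequence of length 3p-3 over (Z/pZ)^2 with no zero-sum subsequence of length ≤ p has the form a^(p-1) b^(p-1) c^(p-1)). If A is a sequence of length 4p-4 over (Z/pZ)^2 containing no zero-sum subsequence of length exactly p, then either A contains an element with multiplicity p-1, or every element of A has multiplicity at most p/2. -/
open Multiset

lemma psmul (p : ℕ) (x : ZMod p × ZMod p) : p • x = 0 := by
  have h : (p : ZMod p) = 0 := ZMod.natCast_self p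
  ext
  · show (p • x).1 = 0
    rw [Prod.smul_fst, nsmul_eq_mul, h, zero_mul]
  · show (p • x).2 = 0
    rw [Prod.smul_snd, nsmul_eq_mul, h, zero_mul]

lemma shape_count {p : ℕ} {a b c : ZMod p × ZMod p} (hab : a ≠ b) (hac : a ≠ c) (hbc : b ≠ c)
    (x : ZMod p × ZMod p) :
    count x (replicate (p-1) a + replicate (p-1) b + replicate (p-1) c) = 0 ∨
    count x (replicate (p-1) a + replicate (p-1) b + replicate (p-1) c) = p - 1 := by
  by_cases hax : a = x <;> by_cases hbx : b = x <;> by_cases hcx : c = x <;>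
    simp_all [count_add, count_replicate]

lemma exists_sub_card {α : Type*} (s : Multiset α) (n : ℕ) (h : n ≤ Multiset.card s) :
    ∃ t ≤ s, Multiset.card t = n := by
  refine ⟨(s.toList.take n : List α), le_of_le_of_eq ?_ (Multiset.coe_toList s), ?_⟩
  · exact Multiset.coe_le.mpr ((s.toList.take_sublist n).subperm)
  · rw [Multiset.coe_card, List.length_take, Multiset.length_toList]; omega

lemma eta (p : ℕ) (hp3 : 3 ≤ p)
    (hC : ∀ B : Multiset (ZMod p × ZMod p), Multiset.card B = 3 * p - 3 →
      (∀ T : Multiset (ZMod p × ZMod p), T ≤ B → T ≠ 0 → Multiset.card T ≤ p → T.sum ≠ 0) →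
      ∃ a b c : ZMod p × ZMod p, a ≠ b ∧ a ≠ c ∧ b ≠ c ∧
        B = Multiset.replicate (p - 1) a + Multiset.replicate (p - 1) b +
            Multiset.replicate (p - 1) c)
    (S : Multiset (ZMod p × ZMod p))
    (hS : ∀ T : Multiset (ZMod p × ZMod p), T ≤ S → T ≠ 0 → Multiset.card T ≤ p → T.sum ≠ 0) :
    Multiset.card S ≤ 3 * p - 3 := by
  by_contra hbig
  push_neg at hbig
  obtain ⟨S₂, hS₂le, hS₂card⟩ := exists_sub_card S (3*p-2) (by omega)
  have hSsub : ∀ T : Multiset (ZMod p × ZMod p), T ≤ S₂ → T ≠ 0 → Multiset.card T ≤ p →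
      T.sum ≠ 0 := fun T hT => hS T (hT.trans hS₂le)
  -- all multiplicities in S₂ are at most p-1
  have hcnt : ∀ x : ZMod p × ZMod p, count x S₂ ≤ p - 1 := by
    intro x
    by_contra hx
    push_neg at hx
    have hrep : replicate p x ≤ S₂ := by
      rw [le_iff_count]
      intro y
      rw [count_replicate]
      split <;> rename_i h
      · subst h; omega
      · omega
    refine hSsub _ hrep ?_ (by rw [card_replicate]) ?_
    · intro h
      have := congrArg Multiset.card h
      simp at this; omega
    · rw [sum_replicate]; exact psmul p x
  -- pick any y in S₂
  have hS₂ne : S₂ ≠ 0 := by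
    intro h; rw [h] at hS₂card; simp at hS₂card; omega
  obtain ⟨y, hy⟩ := exists_mem_of_ne_zero hS₂ne
  have hcard1 : Multiset.card (S₂.erase y) = 3*p-3 := by
    rw [card_erase_of_mem hy, hS₂card, Nat.pred_eq_sub_one]; omega
  obtain ⟨a, b, c, hab, hac, hbc, heq⟩ := hC (S₂.erase y) hcard1
    (fun T hT => hSsub T (hT.trans (erase_le y S₂)))
  have hca : count a (S₂.erase y) = p - 1 := by
    rw [heq, count_add, count_add, count_replicate, count_replicate, count_replicate,
      if_pos rfl, if_neg (fun h => hab h.symm), if_neg (fun h => hac h.symm)]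
    omega
  have hcb : count b (S₂.erase y) = p - 1 := by
    rw [heq, count_add, count_add, count_replicate, count_replicate, count_replicate,
      if_neg hab, if_pos rfl, if_neg (fun h => hbc h.symm)]
    omega
  have hyb : y ≠ b := by
    intro h
    subst h
    rw [count_erase_self] at hcb
    have := hcnt y
    omega
  have hcbS₂ : count b S₂ = p - 1 := by
    rw [count_erase_of_ne (fun h => hyb h.symm) ] at hcb
    exact hcb
  have hbS₂ : b ∈ S₂ := by
    rw [← count_pos, hcbS₂]; omega
  have hcard2 : Multiset.card (S₂.erase b) = 3*p-3 := by
    rw [card_erase_of_mem hbS₂, hS₂card, Nat.pred_eq_sub_one]; omega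
  obtain ⟨a', b', c', hab', hac', hbc', heq'⟩ := hC (S₂.erase b) hcard2
    (fun T hT => hSsub T (hT.trans (erase_le b S₂)))
  have hcb2 : count b (S₂.erase b) = p - 2 := by
    rw [count_erase_self, hcbS₂]
    omega
  have := shape_count hab' hac' hbc' b
  rw [← heq'] at this
  omega


lemma map_add_sum {p : ℕ} (T : Multiset (ZMod p × ZMod p)) (a : ZMod p × ZMod p) :
    (T.map (fun x => x + a)).sum = T.sum + (Multiset.card T) • a := by
  induction T using Multiset.induction with
  | empty => simp
  | cons x s ih =>
    simp only [Multiset.map_cons, Multiset.sum_cons, ih, Multiset.card_cons, succ_nsmul]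
    abel

lemma core (p : ℕ) (hp3 : 3 ≤ p)
    (hC : ∀ B : Multiset (ZMod p × ZMod p), Multiset.card B = 3 * p - 3 →
      (∀ T : Multiset (ZMod p × ZMod p), T ≤ B → T ≠ 0 → Multiset.card T ≤ p → T.sum ≠ 0) →
      ∃ a b c : ZMod p × ZMod p, a ≠ b ∧ a ≠ c ∧ b ≠ c ∧
        B = Multiset.replicate (p - 1) a + Multiset.replicate (p - 1) b +
            Multiset.replicate (p - 1) c)
    (A : Multiset (ZMod p × ZMod p)) (hA : Multiset.card A = 4 * p - 4)
    (hzs : ∀ T : Multiset (ZMod p × ZMod p), T ≤ A → Multiset.card T = p → T.sum ≠ 0)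
    (m : ℕ) (h0 : A.count 0 = m) (hm : p < 2 * m) (hne : m ≠ p - 1) : False := by
  classical
  -- m ≤ p - 2
  have hmle : m ≤ p - 1 := by
    by_contra h
    push_neg at h
    have hrep : replicate p (0 : ZMod p × ZMod p) ≤ A := by
      rw [le_iff_count]
      intro y
      rw [count_replicate]
      split <;> rename_i hy
      · subst hy; omega
      · omega
    exact hzs _ hrep (by rw [card_replicate]) (by rw [sum_replicate, smul_zero])
  have hm2 : m ≤ p - 2 := by omega
  set A' := A.filter (fun x => ¬ x = 0) with hA'def
  have hsplit : replicate m 0 + A' = A := by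
    have h1 : A.filter (fun x => x = 0) = replicate (count 0 A) 0 := filter_eq' A 0
    rw [h0] at h1
    rw [hA'def, ← h1]
    exact filter_add_not _ A
  have hA'card : m + Multiset.card A' = 4 * p - 4 := by
    rw [← hA, ← hsplit, card_add, card_replicate]
  have hmemA' : ∀ x ∈ A', x ≠ 0 := fun x hx => (Multiset.mem_filter.mp hx).2
  -- the window lemma
  have no_win : ∀ T : Multiset (ZMod p × ZMod p), T ≤ A' → T.sum = 0 →
      p ≤ m + Multiset.card T → Multiset.card T ≤ p → False := by
    intro T hT hsum h1 h2
    have hj : p - Multiset.card T ≤ m := by omega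
    have hle : replicate (p - Multiset.card T) (0 : ZMod p × ZMod p) + T ≤ A := by
      rw [← hsplit]
      exact add_le_add ((replicate_le_replicate 0).mpr hj) hT
    refine hzs _ hle ?_ ?_
    · rw [card_add, card_replicate]; omega
    · rw [sum_add, sum_replicate, smul_zero, hsum, add_zero]
  -- multiplicities in A' are at most p - 1
  have hcnt : ∀ x : ZMod p × ZMod p, count x A' ≤ p - 1 := by
    intro x
    by_contra hx
    push_neg at hx
    have hrep : replicate p x ≤ A' := by
      rw [le_iff_count]
      intro y
      rw [count_replicate]
      split <;> rename_i hy
      · subst hy; omega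
      · omega
    exact no_win _ hrep (by rw [sum_replicate]; exact psmul p x)
      (by rw [card_replicate]; omega) (by rw [card_replicate])
  -- maximal zero-sum Z with card ≤ p-1-m
  set P : ℕ → Prop := fun n => ∃ Z : Multiset (ZMod p × ZMod p),
    Z ≤ A' ∧ Z.sum = 0 ∧ Multiset.card Z = n with hPdef
  have hP0 : P 0 := ⟨0, Multiset.zero_le _, sum_zero, card_zero⟩
  set N := Nat.findGreatest P (p - 1 - m) with hNdef
  have hPN : P N := Nat.findGreatest_spec (Nat.zero_le _) hP0
  have hNle : N ≤ p - 1 - m := Nat.findGreatest_le _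
  obtain ⟨Z, hZle, hZsum, hZcard⟩ := hPN
  set C := A' - Z with hCdef
  have hZC : Z + C = A' := add_tsub_cancel_of_le hZle
  have hcardZC : Multiset.card Z + Multiset.card C = Multiset.card A' := by
    rw [← hZC, card_add]
  -- C has no short zero-sum
  have hNSZC : ∀ T : Multiset (ZMod p × ZMod p), T ≤ C → T ≠ 0 → Multiset.card T ≤ p →
      T.sum ≠ 0 := by
    intro T hT hT0 hTp hTsum
    have hTA' : T ≤ A' := hT.trans tsub_le_self
    have h1 : m + Multiset.card T ≤ p - 1 := by
      by_contra h
      exact no_win T hTA' hTsum (by omega) hTp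
    have hTZ : T + Z ≤ A' := (le_tsub_iff_right hZle).mp hT
    have hsum2 : (T + Z).sum = 0 := by rw [sum_add, hTsum, hZsum, add_zero]
    have hcard2 : Multiset.card (T + Z) = Multiset.card T + N := by rw [card_add, hZcard]
    have hTpos : 0 < Multiset.card T := card_pos.mpr hT0
    by_cases hw : p ≤ m + (Multiset.card T + N)
    · exact no_win _ hTZ hsum2 (by omega) (by omega)
    · exact Nat.findGreatest_is_greatest (by omega : N < Multiset.card T + N) (by omega)
        ⟨T + Z, hTZ, hsum2, hcard2⟩
  have hCeta := eta p hp3 hC C hNSZC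
  have hNval : N = p - 1 - m ∧ Multiset.card C = 3 * p - 3 := by omega
  obtain ⟨a, b, c, hab, hac, hbc, hCshape⟩ := hC C hNval.2 hNSZC
  have hcountC : ∀ x : ZMod p × ZMod p, count x C = 0 ∨ count x C = p - 1 := by
    intro x; rw [hCshape]; exact shape_count hab hac hbc x
  have hCa : count a C = p - 1 := by
    rw [hCshape, count_add, count_add, count_replicate, count_replicate, count_replicate,
      if_pos rfl, if_neg (fun h => hab h.symm), if_neg (fun h => hac h.symm)]
    omega
  have hCb : count b C = p - 1 := by
    rw [hCshape, count_add, count_add, count_replicate, count_replicate, count_replicate,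
      if_neg hab, if_pos rfl, if_neg (fun h => hbc h.symm)]
    omega
  have hCc : count c C = p - 1 := by
    rw [hCshape, count_add, count_add, count_replicate, count_replicate, count_replicate,
      if_neg hac, if_neg hbc, if_pos rfl]
    omega
  -- elements of Z are distinct from 0, a, b, c
  have hwne : ∀ w ∈ Z, w ≠ 0 ∧ w ≠ a ∧ w ≠ b ∧ w ≠ c := by
    intro w hw
    have haux : ∀ e : ZMod p × ZMod p, count e C = p - 1 → w ≠ e := by
      intro e he hwe
      subst hwe
      have h1 : 1 ≤ count w Z := count_pos.mpr hw
      have h2 : count w A' = count w Z + count w C := by rw [← hZC, count_add]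
      have := hcnt w
      omega
    exact ⟨hmemA' w (mem_of_le hZle hw), haux a hCa, haux b hCb, haux c hCc⟩
  -- for each w in Z we find U ≤ C with w + U.sum = 0
  have hTw : ∀ w ∈ Z, ∃ U : Multiset (ZMod p × ZMod p), U ≤ C ∧ w + U.sum = 0 ∧
      1 ≤ Multiset.card U ∧ m + Multiset.card U + 2 ≤ p := by
    intro w hw
    obtain ⟨hw0, hwa, hwb, hwc⟩ := hwne w hw
    set X : Multiset (ZMod p × ZMod p) :=
      replicate (p-1) a + replicate (p-1) b + replicate (p-2) c with hXdef
    have hXC : X ≤ C := by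
      rw [hCshape]
      exact add_le_add (add_le_add le_rfl le_rfl) ((replicate_le_replicate c).mpr (by omega))
    have hXcard : Multiset.card X = 3 * p - 4 := by
      rw [hXdef, card_add, card_add, card_replicate, card_replicate, card_replicate]; omega
    set S : Multiset (ZMod p × ZMod p) := w ::ₘ X with hSdef
    have hScard : Multiset.card S = 3 * p - 3 := by
      rw [hSdef, card_cons, hXcard]; omega
    have hSA' : S ≤ A' := by
      rw [← hZC, hSdef, ← singleton_add]
      exact add_le_add (singleton_le.mpr hw) hXC
    have hcXw : count w X = 0 := by
      rw [hXdef, count_add, count_add, count_replicate, count_replicate, count_replicate,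
        if_neg (fun h => hwa h.symm), if_neg (fun h => hwb h.symm), if_neg (fun h => hwc h.symm)]
    have hcSw : count w S = 1 := by
      rw [hSdef, count_cons_self, hcXw]
    have hTex : ∃ T : Multiset (ZMod p × ZMod p),
        T ≤ S ∧ T ≠ 0 ∧ Multiset.card T ≤ p ∧ T.sum = 0 := by
      by_contra hno
      push_neg at hno
      obtain ⟨a', b', c', hab', hac', hbc', heq'⟩ := hC S hScard hno
      have hdich := shape_count hab' hac' hbc' w
      rw [← heq', hcSw] at hdich
      omega
    obtain ⟨T, hTS, hT0, hTp, hTsum⟩ := hTex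
    have hwT : w ∈ T := by
      by_contra hwT
      refine hNSZC T ?_ hT0 hTp hTsum
      rw [le_iff_count]
      intro x
      by_cases hx : x = w
      · subst hx
        simp [count_eq_zero_of_notMem hwT]
      · have h1 : count x T ≤ count x S := count_le_of_le x hTS
        have h2 : count x S = count x X := by rw [hSdef, count_cons_of_ne hx]
        have h3 : count x X ≤ count x C := count_le_of_le x hXC
        omega
    set U := T.erase w with hUdef
    have hTU : T = w ::ₘ U := (cons_erase hwT).symm
    have hUsum : w + U.sum = 0 := by rw [hTU, sum_cons] at hTsum; exact hTsum
    have hUC : U ≤ C := by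
      have h1 : U ≤ S.erase w := erase_le_erase w hTS
      have h2 : S.erase w = X := by rw [hSdef, erase_cons_head]
      rw [h2] at h1
      exact h1.trans hXC
    have hU1 : 1 ≤ Multiset.card U := by
      rcases eq_or_ne U 0 with h | h
      · rw [h, sum_zero, add_zero] at hUsum; exact absurd hUsum hw0
      · have := card_pos.mpr h
        omega
    have hcardTU : Multiset.card T = Multiset.card U + 1 := by rw [hTU, card_cons]
    have hbound : m + Multiset.card T ≤ p - 1 := by
      by_contra h
      exact no_win T (hTS.trans hSA') hTsum (by omega) hTp
    exact ⟨U, hUC, hUsum, hU1, by omega⟩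
  -- choose such U for each w
  set u : (ZMod p × ZMod p) → Multiset (ZMod p × ZMod p) := fun w =>
    if h : ∃ U : Multiset (ZMod p × ZMod p), U ≤ C ∧ w + U.sum = 0 ∧
      1 ≤ Multiset.card U ∧ m + Multiset.card U + 2 ≤ p then h.choose else 0 with hudef
  have hu : ∀ w ∈ Z, (u w) ≤ C ∧ w + (u w).sum = 0 ∧
      1 ≤ Multiset.card (u w) ∧ m + Multiset.card (u w) + 2 ≤ p := by
    intro w hw
    have h : ∃ U : Multiset (ZMod p × ZMod p), U ≤ C ∧ w + U.sum = 0 ∧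
        1 ≤ Multiset.card U ∧ m + Multiset.card U + 2 ≤ p := hTw w hw
    rw [hudef]
    simp only
    rw [dif_pos h]
    exact h.choose_spec
  -- helpers for list sums of multisets
  have hsumcard : ∀ l : List (ZMod p × ZMod p),
      Multiset.card ((l.map u).sum) = (l.map fun w => Multiset.card (u w)).sum := by
    intro l
    induction l with
    | nil => simp
    | cons w l ih =>
      rw [List.map_cons, List.sum_cons, card_add, ih, List.map_cons, List.sum_cons]
  have hsummem : ∀ (l : List (ZMod p × ZMod p)) (x : ZMod p × ZMod p),
      x ∈ (l.map u).sum → ∃ w ∈ l, x ∈ u w := by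
    intro l
    induction l with
    | nil => simp
    | cons w l ih =>
      intro x hx
      rw [List.map_cons, List.sum_cons, mem_add] at hx
      rcases hx with hx | hx
      · exact ⟨w, by simp, hx⟩
      · obtain ⟨w', hw', hxw'⟩ := ih x hx
        exact ⟨w', by simp [hw'], hxw'⟩
  -- main induction over prefixes
  have main : ∀ l : List (ZMod p × ZMod p), (↑l : Multiset (ZMod p × ZMod p)) ≤ Z →
      ((↑l : Multiset (ZMod p × ZMod p)).sum + ((l.map u).sum).sum = 0 ∧
       l.length + (l.map fun w => Multiset.card (u w)).sum ≤ p - 1 - m ∧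
       l.length ≤ (l.map fun w => Multiset.card (u w)).sum) := by
    intro l
    induction l with
    | nil => intro _; exact ⟨by simp, by simp, by simp⟩
    | cons w l ih =>
      intro hle
      have hcons : ((w :: l : List (ZMod p × ZMod p)) : Multiset (ZMod p × ZMod p))
          = w ::ₘ (↑l : Multiset (ZMod p × ZMod p)) := Multiset.cons_coe w l
      have hlle : (↑l : Multiset (ZMod p × ZMod p)) ≤ Z := by
        refine le_trans ?_ hle
        rw [hcons]
        exact le_cons_self _ _
      obtain ⟨ihsum, ihlen, ihlb⟩ := ih hlle
      have hwZ : w ∈ Z := mem_of_le hle (by rw [hcons]; exact mem_cons_self w _)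
      obtain ⟨huC, husum, hu1, hub⟩ := hu w hwZ
      have hsum : ((w :: l : List (ZMod p × ZMod p)) : Multiset (ZMod p × ZMod p)).sum
          + (((w :: l).map u).sum).sum = 0 := by
        rw [hcons, sum_cons, List.map_cons, List.sum_cons, sum_add, add_add_add_comm, husum,
          ihsum, add_zero]
      have hstep : ((w :: l).map fun w => Multiset.card (u w)).sum
          = (l.map fun w => Multiset.card (u w)).sum + Multiset.card (u w) := by
        rw [List.map_cons, List.sum_cons, Nat.add_comm]
      have hlen2 : (w :: l : List (ZMod p × ZMod p)).length = l.length + 1 := by simp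
      refine ⟨hsum, ?_, ?_⟩
      · by_contra hgt
        push_neg at hgt
        rw [hlen2, hstep] at hgt
        set V : Multiset (ZMod p × ZMod p) := ↑(w :: l) with hV
        set Us : Multiset (ZMod p × ZMod p) := ((w :: l).map u).sum with hUs
        have hcardUs : Multiset.card Us =
            (l.map fun w => Multiset.card (u w)).sum + Multiset.card (u w) := by
          rw [hUs, hsumcard, hstep]
        have hcardV : Multiset.card V = l.length + 1 := by
          rw [hV, Multiset.coe_card, hlen2]
        have hUsC : Us ≤ C := by
          rw [le_iff_count]
          intro x
          rcases Nat.eq_zero_or_pos (count x Us) with h | h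
          · omega
          · obtain ⟨w', hw', hxw'⟩ := hsummem _ x (count_pos.mp h)
            have hw'Z : w' ∈ Z := mem_of_le hle (Multiset.mem_coe.mpr hw')
            have hxC : x ∈ C := mem_of_le (hu w' hw'Z).1 hxw'
            have hxCc : count x C = p - 1 :=
              (hcountC x).resolve_left (by have := count_pos.mpr hxC; omega)
            have hcle : count x Us ≤ Multiset.card Us := count_le_card x Us
            omega
        have hVA : V + Us ≤ A' := by
          rw [← hZC]
          exact add_le_add hle hUsC
        refine no_win (V + Us) hVA ?_ ?_ ?_
        · rw [sum_add]; exact hsum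
        · rw [card_add, hcardV, hcardUs]; omega
        · rw [card_add, hcardV, hcardUs]; omega
      · rw [hlen2, hstep]; omega
  have hfin := main Z.toList (le_of_eq (coe_toList Z))
  have hlenZ : Z.toList.length = p - 1 - m := by rw [length_toList, hZcard, hNval.1]
  obtain ⟨-, h2, h3⟩ := hfin
  omega


/-- Let p be an odd prime with Property C. If A is a sequence of length
4p-4 over (Z/pZ)^2 with no zero-sum subsequence of length exactly p, then either A
contains an element with multiplicity p-1, or every element has multiplicity ≤ p/2. -/
theorem stmt0 (p : ℕ) (hp : p.Prime) (hodd : Odd p)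
    (hC : ∀ B : Multiset (ZMod p × ZMod p), Multiset.card B = 3 * p - 3 →
      (∀ T : Multiset (ZMod p × ZMod p), T ≤ B → T ≠ 0 → Multiset.card T ≤ p → T.sum ≠ 0) →
      ∃ a b c : ZMod p × ZMod p, a ≠ b ∧ a ≠ c ∧ b ≠ c ∧
        B = Multiset.replicate (p - 1) a + Multiset.replicate (p - 1) b +
            Multiset.replicate (p - 1) c)
    (A : Multiset (ZMod p × ZMod p)) (hA : Multiset.card A = 4 * p - 4)
    (hzs : ∀ T : Multiset (ZMod p × ZMod p), T ≤ A → Multiset.card T = p → T.sum ≠ 0) :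
    (∃ a : ZMod p × ZMod p, A.count a = p - 1) ∨
    (∀ a : ZMod p × ZMod p, 2 * A.count a ≤ p) := by
  by_contra hcon
  push_neg at hcon
  obtain ⟨h1, a, ha⟩ := hcon
  have hp2 : p ≠ 2 := by
    intro h
    rw [h] at hodd
    simp [Nat.odd_iff] at hodd
  have hp3 : 3 ≤ p := by
    have := hp.two_le
    omega
  set f : (ZMod p × ZMod p) → (ZMod p × ZMod p) := fun x => x - a with hf
  have hfinj : Function.Injective f := by
    intro x y h
    simpa [hf, sub_left_inj] using h
  set A₀ := A.map f with hA₀def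
  have hA₀ : Multiset.card A₀ = 4 * p - 4 := by rw [hA₀def, card_map, hA]
  have hcount0 : A₀.count 0 = A.count a := by
    have h : (0 : ZMod p × ZMod p) = f a := by simp [hf]
    rw [h, hA₀def, count_map_eq_count' f _ hfinj]
  have hzs₀ : ∀ T : Multiset (ZMod p × ZMod p), T ≤ A₀ → Multiset.card T = p → T.sum ≠ 0 := by
    intro T hT hcard hsum
    set T' := T.map (fun x => x + a) with hT'
    have hT'A : T' ≤ A := by
      have h2 := map_le_map (f := fun x => x + a) hT
      rwa [hA₀def, map_map, show ((fun x => x + a) ∘ f) = id from funext fun x => by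
        simp [hf], map_id] at h2
    refine hzs T' hT'A (by rw [hT', card_map, hcard]) ?_
    rw [hT', map_add_sum, hsum, hcard, psmul, zero_add]
  exact core p hp3 hC A₀ hA₀ hzs₀ (A.count a) hcount0 ha (h1 a)
end

section
/- Let p be an odd prime, t an element of Z/pZ, and δ > 0 with δp ≥ 2. Suppose t cannot be written as t ≡ a/b (mod p) with integers a, b satisfying 0 < |b| ≤ 4/δ and |a| ≤ 4/δ. Then the residues {0, t, 2t, ..., ⌊δp/2⌋·t} (mod p), viewed as elements of {0, 1, ..., p-1}, partition the interval [0, p] into subintervals each of length at most δp/2. -/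
section aux
variable {p : ℕ}

def gfun (p : ℕ) (t : ZMod p) (ν : ℕ) : ℕ := ((ν : ZMod p) * t).val

def nfun (p : ℕ) (t : ZMod p) (ν : ℕ) : ℕ := min (gfun p t ν) (p - gfun p t ν)

lemma val_eq_of_int [NeZero p] (z : ZMod p) (m : ℤ) (h : ((m : ℤ) : ZMod p) = z)
    (h0 : 0 ≤ m) (h1 : m < p) : (z.val : ℤ) = m := by
  lift m to ℕ using h0 with n
  have hn : n < p := by exact_mod_cast h1
  rw [← h, Int.cast_natCast, ZMod.val_cast_of_lt hn]

lemma cast_val_eq [NeZero p] (z : ZMod p) : ((z.val : ℕ) : ZMod p) = z :=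
  ZMod.natCast_rightInverse z

lemma sep_count [NeZero p] (t : ZMod p) (b c' : ℕ) (hc'p : c' ≤ p)
    (hmin : ∀ m : ℕ, 1 ≤ m → m < b → c' ≤ nfun p t m) :
    b * c' ≤ p := by
  have key : ∀ (ν ν' i i' : ℕ), ν' < ν → ν < b → i < c' → i' < c' →
      ((ν : ZMod p) * t + (i : ZMod p) = (ν' : ZMod p) * t + (i' : ZMod p)) → False := by
    intro ν ν' i i' hlt hb hi hi' heq
    set m := ν - ν' with hm
    have hm1 : 1 ≤ m := by omega
    have hmb : m < b := by omega
    have hcast : ((m : ZMod p)) * t = (((i' : ℤ) - (i : ℤ) : ℤ) : ZMod p) := by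
      have h1 : ((m : ℕ) : ZMod p) = (ν : ZMod p) - (ν' : ZMod p) := by
        have := Nat.cast_sub (R := ZMod p) hlt.le
        rw [hm, this]
      rw [h1]
      push_cast
      linear_combination heq
    have hspec := hmin m hm1 hmb
    have hvlt := ZMod.val_lt ((m : ZMod p) * t)
    have hg : gfun p t m = ((m : ZMod p) * t).val := rfl
    have hn : nfun p t m = min (gfun p t m) (p - gfun p t m) := rfl
    rcases le_or_gt (i : ℤ) (i' : ℤ) with hd | hd
    · have hv : ((((m : ZMod p)) * t).val : ℤ) = (i' : ℤ) - (i : ℤ) := by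
        apply val_eq_of_int _ _ hcast.symm (by omega)
        have h2 : (i' : ℤ) < c' := by exact_mod_cast hi'
        have h3 : (c' : ℤ) ≤ p := by exact_mod_cast hc'p
        omega
      have h1 : nfun p t m ≤ ((m : ZMod p) * t).val := by
        rw [hn, hg]; exact min_le_left _ _
      omega
    · have hv : ((((m : ZMod p)) * t).val : ℤ) = (p : ℤ) + ((i' : ℤ) - (i : ℤ)) := by
        apply val_eq_of_int
        · rw [hcast]; push_cast [ZMod.natCast_self]; ring
        · have h2 : (i : ℤ) < c' := by exact_mod_cast hi
          have h3 : (c' : ℤ) ≤ p := by exact_mod_cast hc'p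
          omega
        · omega
      have h2 : nfun p t m ≤ p - ((m : ZMod p) * t).val := by
        rw [hn, hg]; exact min_le_right _ _
      omega
  have hinj : Function.Injective
      (fun q : Fin b × Fin c' => ((q.1 : ℕ) : ZMod p) * t + ((q.2 : ℕ) : ZMod p)) := by
    rintro ⟨ν, i⟩ ⟨ν', i'⟩ h
    simp only at h
    rcases lt_trichotomy (ν : ℕ) (ν' : ℕ) with hlt | heq | hgt
    · exact absurd (key ν' ν i' i hlt ν'.isLt i'.isLt i.isLt h.symm) not_false
    · have hνν : ((ν : ℕ) : ZMod p) = ((ν' : ℕ) : ZMod p) := by rw [heq]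
      have hii : ((i : ℕ) : ZMod p) = ((i' : ℕ) : ZMod p) := by
        rw [hνν] at h
        exact add_left_cancel h
      have : (i : ℕ) = (i' : ℕ) := by
        have h1 := ZMod.val_cast_of_lt (lt_of_lt_of_le i.isLt hc'p)
        have h2 := ZMod.val_cast_of_lt (lt_of_lt_of_le i'.isLt hc'p)
        rw [← h1, ← h2, hii]
      exact Prod.ext (Fin.ext heq) (Fin.ext this)
    · exact absurd (key ν ν' i i' hgt ν.isLt i.isLt i'.isLt h) not_false
  have hcard := Fintype.card_le_of_injective _ hinj
  simpa [ZMod.card] using hcard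

lemma hno_min [NeZero p] (t : ZMod p) (δ : ℝ) (hδ : 0 < δ)
    (hno : ¬ ∃ a b : ℤ, b ≠ 0 ∧ |(a : ℝ)| ≤ 4 / δ ∧ |(b : ℝ)| ≤ 4 / δ ∧
      (b : ZMod p) * t = (a : ZMod p))
    (m : ℕ) (hm1 : 1 ≤ m) (hm : (m : ℝ) ≤ 4 / δ) :
    4 / δ < ((nfun p t m : ℕ) : ℝ) := by
  by_contra hcon
  push_neg at hcon
  set z := ((m : ZMod p) * t) with hz
  have hvlt : z.val < p := ZMod.val_lt z
  have hng : nfun p t m = min z.val (p - z.val) := rfl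
  rw [hng] at hcon
  apply hno
  have hbne : (m : ℤ) ≠ 0 := by exact_mod_cast (by omega : m ≠ 0)
  have hbabs : |((m : ℤ) : ℝ)| ≤ 4 / δ := by
    rw [abs_of_nonneg (by positivity)]; exact_mod_cast hm
  have hmt : (((m : ℤ)) : ZMod p) * t = z := by push_cast; rfl
  by_cases hc : z.val ≤ p - z.val
  · refine ⟨(z.val : ℤ), (m : ℤ), hbne, ?_, hbabs, ?_⟩
    · rw [abs_of_nonneg (by positivity)]
      have hmin : min (z.val) (p - z.val) = z.val := min_eq_left hc
      rw [hmin] at hcon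
      exact_mod_cast hcon
    · rw [hmt, Int.cast_natCast, cast_val_eq]
  · refine ⟨(z.val : ℤ) - p, (m : ℤ), hbne, ?_, hbabs, ?_⟩
    · rw [abs_of_nonpos (by push_cast; linarith [(by exact_mod_cast hvlt.le : (z.val:ℝ) ≤ p)])]
      have hmin : min (z.val) (p - z.val) = p - z.val := min_eq_right (by omega)
      rw [hmin] at hcon
      rw [Nat.cast_sub hvlt.le] at hcon
      push_cast
      linarith
    · rw [hmt, Int.cast_sub, Int.cast_natCast, Int.cast_natCast, ZMod.natCast_self,
        cast_val_eq, sub_zero]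

end aux

section claim
variable {p : ℕ}

lemma claimX (p : ℕ) (hp : p.Prime) (hodd : Odd p) (t : ZMod p)
    (δ : ℝ) (hδ : 0 < δ) (hδ2 : δ < 2)
    (hno : ¬ ∃ a b : ℤ, b ≠ 0 ∧ |(a : ℝ)| ≤ 4 / δ ∧ |(b : ℝ)| ≤ 4 / δ ∧
      (b : ZMod p) * t = (a : ZMod p)) :
    8 < δ * p ∧ ∃ u : ℕ, 1 ≤ u ∧ (u : ℝ) ≤ δ * p / 4 ∧ 1 ≤ gfun p t u ∧
      ((gfun p t u : ℕ) : ℝ) ≤ δ * p / 4 := by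
  classical
  haveI := Fact.mk hp
  haveI : NeZero p := ⟨hp.pos.ne'⟩
  haveI : Fact (1 < p) := ⟨hp.one_lt⟩
  have hp1 : 1 < p := hp.one_lt
  have hp3 : 3 ≤ p := by
    rcases hodd with ⟨k, hk⟩
    have := hp.two_le
    omega
  have hpR : (3:ℝ) ≤ p := by exact_mod_cast hp3
  have hppos : (0:ℝ) < p := by linarith
  have hδ4 : (2:ℝ) < 4 / δ := by rw [lt_div_iff₀ hδ]; linarith
  have ht : t ≠ 0 := by
    intro h0
    exact hno ⟨0, 1, one_ne_zero, by simpa using (by positivity : (0:ℝ) ≤ 4/δ),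
      by rw [Int.cast_one, abs_one]; linarith, by simp [h0]⟩
  -- δ p > 8
  have h1min := hno_min t δ hδ hno 1 le_rfl (by linarith)
  have h1le : 2 * nfun p t 1 ≤ p := by
    have h1 : nfun p t 1 ≤ gfun p t 1 := min_le_left _ _
    have h2 : nfun p t 1 ≤ p - gfun p t 1 := min_le_right _ _
    have h3 : gfun p t 1 < p := ZMod.val_lt _
    omega
  have hδp8 : 8 < δ * p := by
    have h1 : (2 * nfun p t 1 : ℝ) ≤ p := by exact_mod_cast h1le
    have h2 : 4 / δ < (p : ℝ) / 2 := by
      refine lt_of_lt_of_le h1min ?_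
      linarith
    rw [div_lt_div_iff₀ hδ (by norm_num : (0:ℝ) < 2)] at h2
    linarith
  -- floor c
  set c : ℕ := ⌊δ * p / 4⌋₊ with hc
  have hc2 : 2 ≤ c := Nat.le_floor (by push_cast; linarith)
  have hcle : (c : ℝ) ≤ δ * p / 4 := Nat.floor_le (by positivity)
  have hclt : δ * p / 4 < (c : ℝ) + 1 := Nat.lt_floor_add_one _
  have hcp : c + 1 ≤ p := by
    have h1 : (2 * c : ℝ) < p := by nlinarith
    have h2 : 2 * c < p := by exact_mod_cast h1
    omega
  -- existence element
  set e : ℕ := (t⁻¹).val with he_def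
  have he : ((e : ℕ) : ZMod p) = t⁻¹ := cast_val_eq _
  have hinv : t⁻¹ * t = 1 := inv_mul_cancel₀ ht
  have hge : gfun p t e = 1 := by
    show ((e : ZMod p) * t).val = 1
    rw [he, hinv, ZMod.val_one]
  have hne : nfun p t e = 1 := by
    show min (gfun p t e) (p - gfun p t e) = 1
    rw [hge]
    exact min_eq_left (by omega)
  have he1 : 1 ≤ e := by
    by_contra h
    have he0 : e = 0 := by omega
    rw [he0] at he
    rw [← he] at hinv
    simp at hinv
  -- b₁
  have hex : ∃ ν, 1 ≤ ν ∧ nfun p t ν ≤ c := ⟨e, he1, by omega⟩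
  set b₁ : ℕ := Nat.find hex with hb₁def
  have hb₁ := Nat.find_spec hex
  have hmin1 : ∀ m, m < b₁ → ¬(1 ≤ m ∧ nfun p t m ≤ c) := fun m hm => Nat.find_min hex hm
  have hsep1 : b₁ * (c + 1) ≤ p := by
    refine sep_count t b₁ (c+1) hcp (fun m h1 h2 => ?_)
    have := hmin1 m h2
    omega
  have hb₁pos : (0:ℝ) < b₁ := by exact_mod_cast hb₁.1
  have hb₁R : (b₁ : ℝ) < 4 / δ := by
    by_contra hcon
    push_neg at hcon
    have hcast : (b₁ : ℝ) * ((c : ℝ) + 1) ≤ p := by exact_mod_cast hsep1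
    have hstep : (b₁ : ℝ) * (δ * p / 4) < (b₁ : ℝ) * ((c:ℝ) + 1) :=
      mul_lt_mul_of_pos_left hclt hb₁pos
    have h2 : (4/δ) * (δ * p / 4) ≤ (b₁:ℝ) * (δ * p / 4) :=
      mul_le_mul_of_nonneg_right hcon (by positivity)
    have hid : (4/δ) * (δ * p / 4) = p := by field_simp
    linarith
  set C₁ : ℕ := nfun p t b₁ with hC₁def
  have hC := hno_min t δ hδ hno b₁ hb₁.1 hb₁R.le
  rw [← hC₁def] at hC
  have hC₁c : C₁ ≤ c := hb₁.2
  have hC₁3 : 3 ≤ C₁ := by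
    have : (2:ℝ) < C₁ := lt_trans hδ4 hC
    have : 2 < C₁ := by exact_mod_cast this
    omega
  have hC₁4 : 4/δ < δ * p / 4 := lt_of_lt_of_le hC (le_trans (by exact_mod_cast hC₁c) hcle)
  have hg₁lt : gfun p t b₁ < p := ZMod.val_lt _
  by_cases hsgn1 : gfun p t b₁ ≤ p - gfun p t b₁
  · -- positive sign at level 1
    refine ⟨hδp8, b₁, hb₁.1, by linarith, ?_, ?_⟩
    · have : nfun p t b₁ = gfun p t b₁ := min_eq_left hsgn1
      omega
    · have h1 : nfun p t b₁ = gfun p t b₁ := min_eq_left hsgn1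
      have : (gfun p t b₁ : ℝ) = (C₁ : ℝ) := by rw [hC₁def, h1]
      rw [this]
      exact le_trans (by exact_mod_cast hC₁c) hcle
  · -- negative sign at level 1
    have hx₁ : gfun p t b₁ = p - C₁ := by
      have : C₁ = p - gfun p t b₁ := min_eq_right (by omega)
      omega
    -- b₂
    have hex2 : ∃ ν, 1 ≤ ν ∧ nfun p t ν < C₁ := ⟨e, he1, by omega⟩
    set b₂ : ℕ := Nat.find hex2 with hb₂def
    have hb₂ := Nat.find_spec hex2
    have hmin2 : ∀ m, m < b₂ → ¬(1 ≤ m ∧ nfun p t m < C₁) := fun m hm => Nat.find_min hex2 hm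
    have hsep2 : b₂ * C₁ ≤ p := by
      refine sep_count t b₂ C₁ (by omega) (fun m h1 h2 => ?_)
      have := hmin2 m h2
      omega
    have hb₂pos : (0:ℝ) < b₂ := by exact_mod_cast hb₂.1
    have hb₂R : (b₂ : ℝ) ≤ δ * p / 4 := by
      have hcast : (b₂ : ℝ) * (C₁ : ℝ) ≤ p := by exact_mod_cast hsep2
      have h1 : (b₂ : ℝ) * (4/δ) ≤ (b₂:ℝ) * C₁ :=
        mul_le_mul_of_nonneg_left hC.le (by positivity)
      have h2 : (b₂ : ℝ) * (4/δ) ≤ p := le_trans h1 hcast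
      rw [← le_div_iff₀ (by positivity)] at h2
      · calc (b₂:ℝ) ≤ (p:ℝ) / (4/δ) := h2
          _ = δ * p / 4 := by field_simp
    have hb₂p : b₂ < p := by
      have : (b₂ : ℝ) < p := by nlinarith
      exact_mod_cast this
    have hg₂lt : gfun p t b₂ < p := ZMod.val_lt _
    have hg₂pos : 1 ≤ gfun p t b₂ := by
      have hcne : ((b₂ : ℕ) : ZMod p) ≠ 0 := by
        intro h0
        rw [ZMod.natCast_eq_zero_iff] at h0
        exact absurd (Nat.le_of_dvd (by omega) h0) (by omega)
      have hprod : ((b₂ : ℕ) : ZMod p) * t ≠ 0 := mul_ne_zero hcne ht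
      have : ((b₂ : ℕ) : ZMod p) * t = 0 ↔ (((b₂:ℕ) : ZMod p) * t).val = 0 :=
        (ZMod.val_eq_zero _).symm
      have hv0 : gfun p t b₂ ≠ 0 := by
        intro hv
        exact hprod (by rw [← ZMod.val_eq_zero]; exact hv)
      omega
    set C₂ : ℕ := nfun p t b₂ with hC₂def
    have hC₂lt : C₂ < C₁ := hb₂.2
    have hC₂1 : 1 ≤ C₂ := by
      have h1 : 1 ≤ gfun p t b₂ := hg₂pos
      have h2 : 1 ≤ p - gfun p t b₂ := by omega
      exact le_min h1 h2
    by_cases hsgn2 : gfun p t b₂ ≤ p - gfun p t b₂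
    · -- positive sign at level 2 : u := b₂
      have hgC : gfun p t b₂ = C₂ := (min_eq_left hsgn2).symm
      refine ⟨hδp8, b₂, hb₂.1, hb₂R, by omega, ?_⟩
      rw [hgC]
      have : (C₂ : ℝ) ≤ (c : ℝ) := by exact_mod_cast (by omega : C₂ ≤ c)
      linarith
    · -- negative sign at level 2 : contradiction
      exfalso
      have hx₂ : gfun p t b₂ = p - C₂ := by
        have : C₂ = p - gfun p t b₂ := min_eq_right (by omega)
        omega
      have hb₁₂ : b₁ ≤ b₂ := Nat.find_min' hex ⟨hb₂.1, by omega⟩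
      have hneq : b₁ ≠ b₂ := by
        intro h
        rw [hC₁def, h, ← hC₂def] at hC₂lt
        omega
      set m : ℕ := b₂ - b₁ with hm_def
      have hm1 : 1 ≤ m := by
        have := hb₁.1
        omega
      have hmb : m < b₂ := by
        have := hb₁.1
        omega
      have hmcast : ((m : ℕ) : ZMod p) * t = ((((C₁ : ℤ) - (C₂ : ℤ) : ℤ)) : ZMod p) := by
        have hsub : ((m : ℕ) : ZMod p) = ((b₂ : ℕ) : ZMod p) - ((b₁ : ℕ) : ZMod p) := by
          rw [hm_def, Nat.cast_sub hb₁₂]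
        rw [hsub, sub_mul]
        have e2 : ((b₂ : ℕ) : ZMod p) * t = ((gfun p t b₂ : ℕ) : ZMod p) := (cast_val_eq _).symm
        have e1 : ((b₁ : ℕ) : ZMod p) * t = ((gfun p t b₁ : ℕ) : ZMod p) := (cast_val_eq _).symm
        rw [e1, e2, hx₁, hx₂]
        have hC₁p : C₁ ≤ p := by omega
        have hC₂p : C₂ ≤ p := by omega
        push_cast [Nat.cast_sub hC₁p, Nat.cast_sub hC₂p, ZMod.natCast_self]
        ring
      have hval : ((((m : ℕ) : ZMod p) * t).val : ℤ) = (C₁ : ℤ) - C₂ := by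
        apply val_eq_of_int _ _ hmcast.symm
        · omega
        · have h1 : (C₁ : ℤ) ≤ c := by exact_mod_cast hC₁c
          have h2 : (c : ℤ) + 1 ≤ p := by exact_mod_cast hcp
          omega
      have hgm : gfun p t m = C₁ - C₂ := by
        have : (gfun p t m : ℤ) = (C₁ : ℤ) - C₂ := hval
        omega
      have hQm : nfun p t m < C₁ := by
        have h1 : nfun p t m ≤ gfun p t m := min_le_left _ _
        omega
      exact hmin2 m hmb ⟨hm1, hQm⟩

end claim


/-- If t ∈ Z/pZ has no representation t ≡ a/b (mod p) with
0 < |b| ≤ 4/δ and |a| ≤ 4/δ, then the residues {0, t, 2t, ..., ⌊δp/2⌋·t} (mod p),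
viewed in {0,...,p-1}, partition [0, p] into subintervals each of length ≤ δp/2. -/
theorem stmt2 (p : ℕ) (hp : p.Prime) (hodd : Odd p) (t : ZMod p)
    (δ : ℝ) (hδ : 0 < δ) (hδp : 2 ≤ δ * p)
    (hno : ¬ ∃ a b : ℤ, b ≠ 0 ∧ |(a : ℝ)| ≤ 4 / δ ∧ |(b : ℝ)| ≤ 4 / δ ∧
      (b : ZMod p) * t = (a : ZMod p)) :
    ∀ x : ℝ, 0 ≤ x → x ≤ p →
      ∃ s₁ s₂ : ℝ,
        s₁ ∈ insert (p : ℝ)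
          {y : ℝ | ∃ ν : ℕ, ν ≤ ⌊δ * p / 2⌋₊ ∧ y = ((((ν : ZMod p) * t).val : ℕ) : ℝ)} ∧
        s₂ ∈ insert (p : ℝ)
          {y : ℝ | ∃ ν : ℕ, ν ≤ ⌊δ * p / 2⌋₊ ∧ y = ((((ν : ZMod p) * t).val : ℕ) : ℝ)} ∧
        s₁ ≤ x ∧ x ≤ s₂ ∧ s₂ - s₁ ≤ δ * p / 2 := by
  intro x hx0 hxp
  classical
  haveI := Fact.mk hp
  haveI : NeZero p := ⟨hp.pos.ne'⟩
  have hppos : (0:ℝ) < p := by exact_mod_cast hp.pos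
  by_cases hδ2 : δ < 2
  swap
  · push_neg at hδ2
    refine ⟨0, (p:ℝ), Set.mem_insert_iff.mpr (Or.inr ⟨0, Nat.zero_le _, by simp⟩),
      Set.mem_insert _ _, hx0, hxp, ?_⟩
    nlinarith
  · obtain ⟨hδp8, u, hu1, huR, hgu1, hguR⟩ := claimX p hp hodd t δ hδ hδ2 hno
    have hno' : ¬ ∃ a b : ℤ, b ≠ 0 ∧ |(a : ℝ)| ≤ 4 / δ ∧ |(b : ℝ)| ≤ 4 / δ ∧
        (b : ZMod p) * (-t) = (a : ZMod p) := by
      rintro ⟨a, b, hb0, ha, hb, heq⟩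
      refine hno ⟨-a, b, hb0, by rwa [Int.cast_neg, abs_neg], hb, ?_⟩
      push_cast
      linear_combination -heq
    obtain ⟨-, v, hv1, hvR, hgv1, hgvR⟩ := claimX p hp hodd (-t) δ hδ hδ2 hno'
    have ht : t ≠ 0 := by
      intro h0
      refine hno ⟨0, 1, one_ne_zero, by simpa using (by positivity : (0:ℝ) ≤ 4/δ), ?_, by simp [h0]⟩
      rw [Int.cast_one, abs_one]
      rw [le_div_iff₀ hδ]
      linarith
    set K : ℕ := ⌊δ * p / 2⌋₊ with hK
    have hKle : (K : ℝ) ≤ δ * p / 2 := Nat.floor_le (by positivity)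
    have hKgt : δ * p / 2 < (K : ℝ) + 1 := Nat.lt_floor_add_one _
    have hKbig : δ * p / 4 + 1 < (K : ℝ) := by linarith
    have huK : u ≤ K := by
      have : (u : ℝ) < K := by linarith
      exact_mod_cast this.le
    have hvK : v ≤ K := by
      have : (v : ℝ) < K := by linarith
      exact_mod_cast this.le
    have hvp : v < p := by
      have : (v:ℝ) < p := by nlinarith
      exact_mod_cast this
    set A : ℕ := gfun p t u with hA
    set B : ℕ := gfun p (-t) v with hB
    have hvt0 : (v : ZMod p) * t ≠ 0 := by
      refine mul_ne_zero ?_ ht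
      intro h0
      rw [ZMod.natCast_eq_zero_iff] at h0
      exact absurd (Nat.le_of_dvd (by omega) h0) (by omega)
    have hBrel : B = p - gfun p t v := by
      show ((v : ZMod p) * (-t)).val = p - ((v : ZMod p) * t).val
      rw [mul_neg, ZMod.neg_val, if_neg hvt0]
    have hBlt : B < p := ZMod.val_lt _
    have hgvlt : gfun p t v < p := ZMod.val_lt _
    have hgvpos : 1 ≤ gfun p t v := by omega
    have hA1 : 1 ≤ A := hgu1
    have hB1 : 1 ≤ B := hgv1
    have hAR : (A : ℝ) ≤ δ * p / 4 := hguR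
    have hBR : (B : ℝ) ≤ δ * p / 4 := hgvR
    -- maximal point below x
    set T : Finset ℕ := (Finset.range (K+1)).filter (fun ν => ((gfun p t ν : ℕ) : ℝ) ≤ x) with hT
    have hT0 : 0 ∈ T := by
      refine Finset.mem_filter.mpr ⟨Finset.mem_range.mpr (by omega), ?_⟩
      have : gfun p t 0 = 0 := by simp [gfun]
      rw [this]
      exact_mod_cast hx0
    obtain ⟨ν₁, hν₁T, hmax⟩ := Finset.exists_max_image T (fun ν => gfun p t ν) ⟨0, hT0⟩
    have hν₁K : ν₁ ≤ K := by
      have := Finset.mem_range.mp (Finset.mem_filter.mp hν₁T).1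
      omega
    have hν₁x : ((gfun p t ν₁ : ℕ) : ℝ) ≤ x := (Finset.mem_filter.mp hν₁T).2
    have hmem : ∀ ν : ℕ, ν ≤ K →
        ((gfun p t ν : ℕ) : ℝ) ∈ insert (p : ℝ)
          {y : ℝ | ∃ ν' : ℕ, ν' ≤ K ∧ y = ((((ν' : ZMod p) * t).val : ℕ) : ℝ)} :=
      fun ν h => Set.mem_insert_iff.mpr (Or.inr ⟨ν, h, rfl⟩)
    have eν₁ : ((gfun p t ν₁ : ℕ) : ZMod p) = (ν₁ : ZMod p) * t := cast_val_eq _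
    have eu : ((A : ℕ) : ZMod p) = (u : ZMod p) * t := cast_val_eq _
    have evt : ((gfun p t v : ℕ) : ZMod p) = (v : ZMod p) * t := cast_val_eq _
    have hvtB : (v : ZMod p) * t = -((B : ℕ) : ZMod p) := by
      rw [← evt]
      have h1 : gfun p t v = p - B := by omega
      rw [h1]
      push_cast [Nat.cast_sub hBlt.le, ZMod.natCast_self]
      ring
    have finish : ∀ (ν₂ D : ℕ), ν₂ ≤ K → 1 ≤ D → (D : ℝ) ≤ δ * p / 2 →
        ((ν₂ : ZMod p) * t) = (((gfun p t ν₁ + D : ℕ)) : ZMod p) →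
        ∃ s₁ s₂ : ℝ,
          s₁ ∈ insert (p : ℝ) {y : ℝ | ∃ ν : ℕ, ν ≤ K ∧ y = ((((ν : ZMod p) * t).val : ℕ) : ℝ)} ∧
          s₂ ∈ insert (p : ℝ) {y : ℝ | ∃ ν : ℕ, ν ≤ K ∧ y = ((((ν : ZMod p) * t).val : ℕ) : ℝ)} ∧
          s₁ ≤ x ∧ x ≤ s₂ ∧ s₂ - s₁ ≤ δ * p / 2 := by
      intro ν₂ D hν₂K hD1 hDR hcast
      by_cases hlt : gfun p t ν₁ + D < p
      · have hval : gfun p t ν₂ = gfun p t ν₁ + D := by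
          show ((ν₂ : ZMod p) * t).val = _
          rw [hcast, ZMod.val_cast_of_lt hlt]
        have hgt : x < ((gfun p t ν₂ : ℕ) : ℝ) := by
          by_contra hcon
          push_neg at hcon
          have hmemT : ν₂ ∈ T := Finset.mem_filter.mpr ⟨Finset.mem_range.mpr (by omega), hcon⟩
          have := hmax ν₂ hmemT
          omega
        refine ⟨((gfun p t ν₁ : ℕ) : ℝ), ((gfun p t ν₂ : ℕ) : ℝ), hmem ν₁ hν₁K, hmem ν₂ hν₂K,
          hν₁x, hgt.le, ?_⟩
        rw [hval]
        push_cast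
        linarith
      · refine ⟨((gfun p t ν₁ : ℕ) : ℝ), (p : ℝ), hmem ν₁ hν₁K, Set.mem_insert _ _,
          hν₁x, hxp, ?_⟩
        have h1 : (p : ℝ) ≤ (gfun p t ν₁ : ℝ) + D := by
          have := not_lt.mp hlt
          exact_mod_cast this
        linarith
    by_cases hcase1 : ν₁ + u ≤ K
    · refine finish (ν₁ + u) A hcase1 hA1 (by linarith) ?_
      push_cast
      linear_combination -eν₁ - eu
    · by_cases hcase2 : v ≤ ν₁
      · refine finish (ν₁ - v) B (by omega) hB1 (by linarith) ?_
        push_cast [Nat.cast_sub hcase2]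
        linear_combination -eν₁ - hvtB
      · refine finish (ν₁ + u - v) (A + B) (by omega) (by omega) (by push_cast; linarith) ?_
        push_cast [Nat.cast_sub (by omega : v ≤ ν₁ + u)]
        linear_combination -eν₁ - eu - hvtB
end

section
/- Let B be a sequence over Z/pZ of length at least 3p/2 in which every element has multiplicity at most p/2. Then every element of Z/pZ can be represented as the sum of a subsequence of B of length exactly p. -/
open Multiset Finset Pointwise

lemma exists_block_partition {α : Type*} [DecidableEq α] :
    ∀ (k : ℕ) (B : Multiset α), (∀ x, B.count x ≤ k) → k ≤ Multiset.card B →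
      ∃ L : List (Finset α), L.length = k ∧ (∀ F ∈ L, F.Nonempty) ∧
        (L.map Finset.val).sum = B := by
  intro k
  induction k with
  | zero =>
    intro B hcnt hcard
    refine ⟨[], rfl, by simp, ?_⟩
    have : B = 0 := by
      ext x
      simpa using hcnt x
    simp [this]
  | succ k ih =>
    intro B hcnt hcard
    by_cases hmax : ∃ x, B.count x = k + 1
    · -- peel all elements of maximal multiplicity
      set M : Finset α := B.toFinset.filter (fun v => B.count v = k + 1) with hM
      have hMmem : ∀ a, a ∈ M ↔ B.count a = k + 1 := by
        intro a
        simp only [hM, Finset.mem_filter, Multiset.mem_toFinset, and_iff_right_iff_imp]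
        intro h
        rw [← Multiset.count_pos, h]; omega
      have hMne : M.Nonempty := by
        obtain ⟨x, hx⟩ := hmax
        exact ⟨x, (hMmem x).2 hx⟩
      have hMcnt : ∀ a, (M.val : Multiset α).count a = if a ∈ M then 1 else 0 := by
        intro a
        split_ifs with h
        · exact Multiset.count_eq_one_of_mem M.nodup h
        · exact Multiset.count_eq_zero_of_notMem h
      have hMle : (M.val : Multiset α) ≤ B := by
        rw [Multiset.le_iff_count]
        intro a
        rw [hMcnt a]
        split_ifs with h
        · rw [(hMmem a).1 h]; omega
        · exact Nat.zero_le _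
      -- cardinality bound: (k+1) * |M| ≤ card B
      have hcardM : (k + 1) * M.card ≤ Multiset.card B := by
        calc (k + 1) * M.card = ∑ a ∈ M, (k + 1) := by
              rw [Finset.sum_const, smul_eq_mul, Nat.mul_comm]
        _ = ∑ a ∈ M, B.count a := Finset.sum_congr rfl (fun a ha => ((hMmem a).1 ha).symm)
        _ ≤ ∑ a ∈ B.toFinset, B.count a := by
            apply Finset.sum_le_sum_of_subset
            intro a ha; exact (Finset.mem_filter.1 (hM ▸ ha)).1
        _ = Multiset.card B := by rw [Multiset.toFinset_sum_count_eq]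
      set B' := B - M.val with hB'
      have hB'cnt : ∀ x, B'.count x ≤ k := by
        intro x
        rw [hB', Multiset.count_sub, hMcnt x]
        split_ifs with h
        · rw [(hMmem x).1 h]; omega
        · have := hcnt x
          have hne : B.count x ≠ k + 1 := fun hc => h ((hMmem x).2 hc)
          omega
      have hB'card : Multiset.card B' = Multiset.card B - M.card := by
        rw [hB', Multiset.card_sub hMle]; simp
      have hkB' : k ≤ Multiset.card B' := by
        rw [hB'card]
        have hMpos : 1 ≤ M.card := hMne.card_pos
        have h2 : k + M.card ≤ (k + 1) * M.card := by nlinarith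
        omega
      obtain ⟨L, hlen, hne, hsum⟩ := ih B' hB'cnt hkB'
      refine ⟨M :: L, by simp [hlen], ?_, ?_⟩
      · intro F hF
        rcases List.mem_cons.1 hF with h | h
        · exact h ▸ hMne
        · exact hne F h
      · simp only [List.map_cons, List.sum_cons, hsum, hB']
        rw [add_comm, tsub_add_cancel_of_le hMle]
    · -- all counts ≤ k: peel a single element
      push_neg at hmax
      have hBne : B ≠ 0 := by
        intro h
        rw [h] at hcard
        simp at hcard
      obtain ⟨b, hb⟩ := Multiset.exists_mem_of_ne_zero hBne
      have hble : ({b} : Multiset α) ≤ B := Multiset.singleton_le.2 hb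
      set B' := B.erase b with hB'
      have hB'cnt : ∀ x, B'.count x ≤ k := by
        intro x
        have h1 := hcnt x
        have h2 := hmax x
        have : B'.count x ≤ B.count x := by
          rw [hB']; exact Multiset.count_le_of_le x (Multiset.erase_le b B)
        omega
      have hkB' : k ≤ Multiset.card B' := by
        have h3 : Multiset.card B' = Multiset.card B - 1 := by
          rw [hB', Multiset.card_erase_of_mem hb, Nat.pred_eq_sub_one]
        omega
      obtain ⟨L, hlen, hne, hsum⟩ := ih B' hB'cnt hkB'
      refine ⟨{b} :: L, by simp [hlen], ?_, ?_⟩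
      · intro F hF
        rcases List.mem_cons.1 hF with h | h
        · exact h ▸ Finset.singleton_nonempty b
        · exact hne F h
      · simp only [List.map_cons, List.sum_cons, hsum, hB']
        rw [Finset.singleton_val, Multiset.singleton_add, Multiset.cons_erase hb]

lemma fold_nonempty {p : ℕ} (L : List (Finset (ZMod p))) (hne : ∀ F ∈ L, F.Nonempty) :
    (L.foldr (· + ·) ({0} : Finset (ZMod p))).Nonempty := by
  induction L with
  | nil => exact ⟨0, by simp⟩
  | cons F L ih =>
    have h1 : F.Nonempty := hne F (by simp)
    have h2 := ih (fun G hG => hne G (by simp [hG]))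
    exact h1.add h2

lemma fold_card {p : ℕ} (hp : p.Prime) (L : List (Finset (ZMod p)))
    (hne : ∀ F ∈ L, F.Nonempty) :
    min p ((L.map (fun F => F.card - 1)).sum + 1) ≤ (L.foldr (· + ·) ({0} : Finset (ZMod p))).card := by
  induction L with
  | nil => simp [Nat.min_le_right]
  | cons F L ih =>
    have h1 : F.Nonempty := hne F (by simp)
    have h2 := ih (fun G hG => hne G (by simp [hG]))
    have hSne := fold_nonempty L (fun G hG => hne G (by simp [hG]))
    have hcd := ZMod.cauchy_davenport hp h1 hSne
    simp only [List.foldr_cons, List.map_cons, List.sum_cons]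
    refine le_trans ?_ hcd
    have hF1 : 1 ≤ F.card := h1.card_pos
    have hS1 : 1 ≤ (L.foldr (· + ·) ({0} : Finset (ZMod p))).card := hSne.card_pos
    set s := (L.map (fun F => F.card - 1)).sum
    set c := (L.foldr (· + ·) ({0} : Finset (ZMod p))).card
    have h2' : min p (s + 1) ≤ c := h2
    omega

lemma fold_mem {p : ℕ} (L : List (Finset (ZMod p))) (s : ZMod p)
    (hs : s ∈ L.foldr (· + ·) ({0} : Finset (ZMod p))) :
    ∃ C : Multiset (ZMod p), C ≤ (L.map Finset.val).sum ∧
      Multiset.card C = L.length ∧ C.sum = s := by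
  induction L generalizing s with
  | nil =>
    refine ⟨0, le_refl _, rfl, ?_⟩
    simp only [List.foldr_nil, Finset.mem_singleton] at hs
    simp [hs]
  | cons F L ih =>
    simp only [List.foldr_cons] at hs
    rw [Finset.mem_add] at hs
    obtain ⟨a, ha, t, ht, hat⟩ := hs
    obtain ⟨C, hC, hcard, hsum⟩ := ih t ht
    refine ⟨a ::ₘ C, ?_, by simp [hcard], by simp [hsum, hat]⟩
    simp only [List.map_cons, List.sum_cons]
    rw [← Multiset.singleton_add]
    exact add_le_add (Multiset.singleton_le.2 ha) hC

lemma card_list_sum {α : Type*} : ∀ l : List (Multiset α),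
    Multiset.card l.sum = (l.map Multiset.card).sum := by
  intro l
  induction l with
  | nil => simp
  | cons a l ih => simp [ih]

lemma list_sum_sub_one : ∀ l : List ℕ, l.sum ≤ (l.map (· - 1)).sum + l.length := by
  intro l
  induction l with
  | nil => simp
  | cons a l ih => simp only [List.map_cons, List.sum_cons, List.length_cons]; omega

/-- For all sufficiently large primes p: if B is a sequence over Z/pZ of
length at least 3p/2 in which every element has multiplicity at most p/2, then every
element of Z/pZ is the sum of a subsequence of B of length exactly p. -/
theorem stmt3 :
    ∃ p0 : ℕ, ∀ p : ℕ, p.Prime → p > p0 →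
      ∀ B : Multiset (ZMod p), 3 * p ≤ 2 * Multiset.card B →
        (∀ x : ZMod p, 2 * B.count x ≤ p) →
        ∀ y : ZMod p, ∃ T : Multiset (ZMod p), T ≤ B ∧ Multiset.card T = p ∧ T.sum = y := by
  refine ⟨1, fun p hp hp1 B hcard hcnt y => ?_⟩
  haveI : NeZero p := ⟨hp.ne_zero⟩
  set n := Multiset.card B with hn
  set k := n - p with hk
  have hpn : p ≤ n := by omega
  have h2k : p ≤ 2 * k := by omega
  have hcnt' : ∀ x, B.count x ≤ k := fun x => by have := hcnt x; omega
  have hkn : k ≤ n := by omega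
  obtain ⟨L, hlen, hne, hsum⟩ := exists_block_partition k B hcnt' (by omega)
  -- the sumset of one-per-block choices
  set S := L.foldr (· + ·) ({0} : Finset (ZMod p)) with hS
  have hcardsum : (L.map (fun F => Finset.card F)).sum = n := by
    have h1 : (L.map (fun F : Finset (ZMod p) => Finset.card F)).sum
        = ((L.map Finset.val).map Multiset.card).sum := by
      rw [List.map_map]; rfl
    rw [h1, ← card_list_sum, hsum]
  have hbound : p ≤ (L.map (fun F => Finset.card F - 1)).sum + 1 := by
    have h2 := list_sum_sub_one (L.map (fun F : Finset (ZMod p) => Finset.card F))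
    rw [hcardsum, List.length_map, hlen] at h2
    have h3 : (L.map (fun F : Finset (ZMod p) => Finset.card F)).map (· - 1)
        = L.map (fun F => Finset.card F - 1) := by rw [List.map_map]; rfl
    rw [h3] at h2
    omega
  have hScard : p ≤ S.card := by
    have := fold_card hp L hne
    rw [← hS] at this
    omega
  have hSuniv : S = Finset.univ := by
    apply Finset.eq_univ_of_card
    have hle : S.card ≤ Fintype.card (ZMod p) := Finset.card_le_univ S
    rw [ZMod.card p] at hle ⊢
    omega
  have hsmem : B.sum - y ∈ S := by rw [hSuniv]; exact Finset.mem_univ _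
  obtain ⟨C, hC, hCcard, hCsum⟩ := fold_mem L (B.sum - y) hsmem
  rw [hsum] at hC
  rw [hlen] at hCcard
  refine ⟨B - C, Multiset.sub_le_self B C, ?_, ?_⟩
  · rw [Multiset.card_sub hC]; omega
  · have h4 := congrArg Multiset.sum (tsub_add_cancel_of_le hC)
    rw [Multiset.sum_add, hCsum] at h4
    linear_combination h4
end

section
/- Let A be a real sequence over Z² with total length 3.99, maximal multiplicity ≤ 1/2, no line of multiplicity > 3/2, satisfying the replacement-closure property of Lemma DReplace, and suppose Σ¹_R(A) has no interior lattice point. Then there exist three affinely independent points of A each having multiplicity exactly 1/2. -/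
open scoped Classical

noncomputable section

def toR2 (a : ℤ × ℤ) : ℝ × ℝ := ((a.1 : ℝ), (a.2 : ℝ))

def sigmaR (lam : ℝ) (A : (ℤ × ℤ) →₀ ℝ) : Set (ℝ × ℝ) :=
  { x | ∃ t : (ℤ × ℤ) → ℝ, (∀ a, 0 ≤ t a ∧ t a ≤ A a) ∧
      (∑ a ∈ A.support, t a) = lam ∧ (∑ a ∈ A.support, t a • toR2 a) = x }

def lineMult (A : (ℤ × ℤ) →₀ ℝ) (q w : ℝ × ℝ) : ℝ :=
  ∑ a ∈ A.support, if ∃ r : ℝ, toR2 a = q + r • w then A a else 0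

/-- The replacement-closure property of Lemma DReplace: whenever v₁, v₂, v₃, v are
distinct lattice points with μ(v₁), μ(v₂), μ(v₃) positive and v lies in the triangle
v₁v₂v₃, either μ(v) = 1/2 or v lies on a line of multiplicity 3/2 which is not the
line supporting a side of the triangle containing v. -/
def ReplacementClosed (A : (ℤ × ℤ) →₀ ℝ) : Prop :=
  ∀ v₁ v₂ v₃ v : ℤ × ℤ, v₁ ≠ v₂ → v₁ ≠ v₃ → v₂ ≠ v₃ →
    v ≠ v₁ → v ≠ v₂ → v ≠ v₃ →
    0 < A v₁ → 0 < A v₂ → 0 < A v₃ →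
    toR2 v ∈ convexHull ℝ {toR2 v₁, toR2 v₂, toR2 v₃} →
    A v = 1 / 2 ∨
      ∃ q w : ℝ × ℝ, w ≠ 0 ∧ (∃ r : ℝ, toR2 v = q + r • w) ∧
        lineMult A q w = 3 / 2 ∧
        ∀ x y : ℤ × ℤ, x ∈ ({v₁, v₂, v₃} : Set (ℤ × ℤ)) →
          y ∈ ({v₁, v₂, v₃} : Set (ℤ × ℤ)) → x ≠ y →
          toR2 v ∈ segment ℝ (toR2 x) (toR2 y) →
          ¬ ((∃ r : ℝ, toR2 x = q + r • w) ∧ (∃ r : ℝ, toR2 y = q + r • w))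

namespace Stmt7

def zdet (d v : ℤ × ℤ) : ℤ := d.1 * v.2 - d.2 * v.1

lemma exists_primitive (e : ℤ × ℤ) (he : e ≠ 0) :
    ∃ (d : ℤ × ℤ) (g : ℤ), 0 < g ∧ e = (g * d.1, g * d.2) ∧ Int.gcd d.1 d.2 = 1 := by
  have hne : e.1 ≠ 0 ∨ e.2 ≠ 0 := by
    by_contra hc; push_neg at hc; exact he (Prod.ext hc.1 hc.2)
  have hg0 : 0 < Int.gcd e.1 e.2 := by
    rcases hne with h1 | h2
    · exact Int.gcd_pos_of_ne_zero_left _ h1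
    · exact Int.gcd_pos_of_ne_zero_right _ h2
  set g : ℤ := (Int.gcd e.1 e.2 : ℤ) with hgdef
  have hgpos : 0 < g := by positivity
  refine ⟨(e.1 / g, e.2 / g), g, hgpos, ?_, ?_⟩
  · have h1 : g * (e.1 / g) = e.1 := Int.mul_ediv_cancel' (Int.gcd_dvd_left _ _)
    have h2 : g * (e.2 / g) = e.2 := Int.mul_ediv_cancel' (Int.gcd_dvd_right _ _)
    exact Prod.ext h1.symm h2.symm
  · exact Int.gcd_div_gcd_div_gcd hg0

lemma prim_bezout (d : ℤ × ℤ) (hd : Int.gcd d.1 d.2 = 1) :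
    ∃ c1 c2 : ℤ, c1 * d.1 + c2 * d.2 = 1 := by
  refine ⟨Int.gcdA d.1 d.2, Int.gcdB d.1 d.2, ?_⟩
  have := Int.gcd_eq_gcd_ab d.1 d.2
  rw [hd] at this
  push_cast at this
  linarith [this]

lemma zdet_zero_dvd (d v : ℤ × ℤ) (hd : Int.gcd d.1 d.2 = 1) (h : zdet d v = 0) :
    ∃ t : ℤ, v = (t * d.1, t * d.2) := by
  obtain ⟨c1, c2, hc⟩ := prim_bezout d hd
  simp only [zdet, sub_eq_zero] at h
  refine ⟨c1 * v.1 + c2 * v.2, Prod.ext ?_ ?_⟩ <;> simp only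
  · linear_combination (-v.1) * hc - c2 * h
  · linear_combination (-v.2) * hc + c1 * h


lemma pack (S : Finset (ℤ × ℤ)) (pos : ℤ × ℤ → ℤ) (hinj : Set.InjOn pos S)
    (X Y : (ℤ × ℤ) → ℝ) (a : ℤ)
    (hX0 : ∀ i ∈ S, 0 ≤ X i) (hY0 : ∀ i ∈ S, 0 ≤ Y i)
    (hXs : ∀ i ∈ S, X i ≠ 0 → pos i ≤ a) (hYs : ∀ i ∈ S, Y i ≠ 0 → a ≤ pos i)
    (hXm : ∑ i ∈ S, X i = 1/2) (hYm : ∑ i ∈ S, Y i = 1/2)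
    (hshare : ∀ i ∈ S, pos i = a → X i + Y i ≤ 1/2) :
    ∑ i ∈ S, X i * (pos i : ℝ) + 1/2 ≤ ∑ i ∈ S, Y i * (pos i : ℝ) := by
  classical
  set Sa := S.filter (fun i => pos i = a) with hSa
  set Sc := S.filter (fun i => ¬ pos i = a) with hSc
  set Xa := ∑ i ∈ Sa, X i with hXa
  set Ya := ∑ i ∈ Sa, Y i with hYa
  have hmemSa : ∀ i ∈ Sa, i ∈ S ∧ pos i = a := by
    intro i hi; exact ⟨(Finset.mem_filter.mp hi).1, (Finset.mem_filter.mp hi).2⟩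
  have hmemSc : ∀ i ∈ Sc, i ∈ S ∧ pos i ≠ a := by
    intro i hi; exact ⟨(Finset.mem_filter.mp hi).1, (Finset.mem_filter.mp hi).2⟩
  -- share bound
  have hXYa : Xa + Ya ≤ 1/2 := by
    rcases Finset.eq_empty_or_nonempty Sa with he | ⟨i0, hi0⟩
    · rw [hXa, hYa, he]; simp
    · have hSa_single : Sa = {i0} := by
        apply Finset.eq_singleton_iff_unique_mem.mpr
        refine ⟨hi0, fun j hj => ?_⟩
        have h1 := hmemSa j hj; have h2 := hmemSa i0 hi0
        exact hinj h1.1 h2.1 (h1.2.trans h2.2.symm)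
      rw [hXa, hYa, hSa_single, Finset.sum_singleton, Finset.sum_singleton]
      exact hshare i0 (hmemSa i0 hi0).1 (hmemSa i0 hi0).2
  -- splits
  have hsplitX : ∑ i ∈ S, X i * (pos i : ℝ)
      = ∑ i ∈ Sa, X i * (pos i : ℝ) + ∑ i ∈ Sc, X i * (pos i : ℝ) :=
    (Finset.sum_filter_add_sum_filter_not S _ _).symm
  have hsplitY : ∑ i ∈ S, Y i * (pos i : ℝ)
      = ∑ i ∈ Sa, Y i * (pos i : ℝ) + ∑ i ∈ Sc, Y i * (pos i : ℝ) :=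
    (Finset.sum_filter_add_sum_filter_not S _ _).symm
  have hmassX : ∑ i ∈ Sc, X i = 1/2 - Xa := by
    have := (Finset.sum_filter_add_sum_filter_not S (fun i => pos i = a) X)
    rw [← hSa, ← hSc] at this
    rw [← hXa] at this
    linarith [hXm, this]
  have hmassY : ∑ i ∈ Sc, Y i = 1/2 - Ya := by
    have := (Finset.sum_filter_add_sum_filter_not S (fun i => pos i = a) Y)
    rw [← hSa, ← hSc] at this
    rw [← hYa] at this
    linarith [hYm, this]
  have hXaeq : ∑ i ∈ Sa, X i * (pos i : ℝ) = (a : ℝ) * Xa := by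
    rw [hXa, Finset.mul_sum]
    apply Finset.sum_congr rfl
    intro i hi; rw [(hmemSa i hi).2]; ring
  have hYaeq : ∑ i ∈ Sa, Y i * (pos i : ℝ) = (a : ℝ) * Ya := by
    rw [hYa, Finset.mul_sum]
    apply Finset.sum_congr rfl
    intro i hi; rw [(hmemSa i hi).2]; ring
  have hXc : ∑ i ∈ Sc, X i * (pos i : ℝ) ≤ ((a : ℝ) - 1) * (1/2 - Xa) := by
    rw [← hmassX, Finset.mul_sum]
    apply Finset.sum_le_sum
    intro i hi
    rcases eq_or_ne (X i) 0 with h0 | h0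
    · rw [h0]; simp
    · have hle : pos i ≤ a := hXs i (hmemSc i hi).1 h0
      have hlt : pos i ≤ a - 1 := by
        rcases lt_or_eq_of_le hle with h | h
        · omega
        · exact absurd h (hmemSc i hi).2
      have : (pos i : ℝ) ≤ (a : ℝ) - 1 := by exact_mod_cast hlt
      have hx0 := hX0 i (hmemSc i hi).1
      calc X i * (pos i : ℝ) ≤ X i * ((a:ℝ) - 1) := by
            apply mul_le_mul_of_nonneg_left this hx0
      _ = ((a:ℝ) - 1) * X i := by ring
  have hYc : ((a : ℝ) + 1) * (1/2 - Ya) ≤ ∑ i ∈ Sc, Y i * (pos i : ℝ) := by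
    rw [← hmassY, Finset.mul_sum]
    apply Finset.sum_le_sum
    intro i hi
    rcases eq_or_ne (Y i) 0 with h0 | h0
    · rw [h0]; simp
    · have hle : a ≤ pos i := hYs i (hmemSc i hi).1 h0
      have hlt : a + 1 ≤ pos i := by
        rcases lt_or_eq_of_le hle with h | h
        · omega
        · exact absurd h.symm (hmemSc i hi).2
      have : (a : ℝ) + 1 ≤ (pos i : ℝ) := by exact_mod_cast hlt
      have hy0 := hY0 i (hmemSc i hi).1
      calc ((a:ℝ) + 1) * Y i ≤ (pos i : ℝ) * Y i := by
            apply mul_le_mul_of_nonneg_right this hy0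
      _ = Y i * (pos i : ℝ) := by ring
  have hkey : ((a:ℝ) * Ya + ((a:ℝ)+1) * (1/2 - Ya)) - ((a:ℝ) * Xa + ((a:ℝ)-1) * (1/2 - Xa))
      = 1 - Xa - Ya := by ring
  rw [hsplitX, hsplitY, hXaeq, hYaeq]
  linarith [hXc, hYc, hkey, hXYa]


lemma exists_bot (S : Finset (ℤ × ℤ)) (pos : ℤ × ℤ → ℤ) (hinj : Set.InjOn pos S)
    (w : ℤ × ℤ → ℝ) (hw0 : ∀ i ∈ S, 0 ≤ w i)
    (M : ℝ) (hM0 : 0 < M) (hMle : M ≤ ∑ i ∈ S, w i) :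
    ∃ (c : ℤ) (ic : ℤ × ℤ) (b : ℤ × ℤ → ℝ),
      ic ∈ S ∧ pos ic = c ∧
      (∀ i, i ∉ S → b i = 0) ∧
      (∀ i ∈ S, 0 ≤ b i) ∧
      (∀ i ∈ S, b i ≤ w i) ∧
      ((∑ i ∈ S, b i) = M) ∧
      (∀ i ∈ S, pos i < c → b i = w i) ∧
      (∀ i ∈ S, c < pos i → b i = 0) ∧
      (∀ i ∈ S, pos i = c → b i = M - ∑ j ∈ S.filter (fun j => pos j < c), w j) ∧
      ((∑ j ∈ S.filter (fun j => pos j < c), w j) < M) ∧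
      (M ≤ ∑ j ∈ S.filter (fun j => pos j ≤ c), w j) ∧
      (∀ j ∈ S, M ≤ (∑ i ∈ S.filter (fun i' => pos i' ≤ pos j), w i) → c ≤ pos j) := by
  classical
  have hSne : S.Nonempty := by
    rcases Finset.eq_empty_or_nonempty S with he | h
    · exfalso; rw [he] at hMle; simp at hMle; linarith
    · exact h
  set T := S.filter (fun i => M ≤ ∑ j ∈ S.filter (fun j => pos j ≤ pos i), w j) with hT
  have hTne : T.Nonempty := by
    obtain ⟨imax, himax, hmax⟩ := S.exists_max_image pos hSne
    refine ⟨imax, Finset.mem_filter.mpr ⟨himax, ?_⟩⟩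
    have : S.filter (fun j => pos j ≤ pos imax) = S := Finset.filter_true_of_mem hmax
    rw [this]
    exact hMle
  have hTimg : (T.image pos).Nonempty := hTne.image pos
  set c := (T.image pos).min' hTimg with hc
  have hcmem : c ∈ T.image pos := (T.image pos).min'_mem hTimg
  obtain ⟨ic, hicT, hicpos⟩ := Finset.mem_image.mp hcmem
  have hicS : ic ∈ S := (Finset.mem_filter.mp hicT).1
  have hicF : M ≤ ∑ j ∈ S.filter (fun j => pos j ≤ c), w j := by
    have h := (Finset.mem_filter.mp hicT).2
    rwa [hicpos] at h
  have hminprop : ∀ j ∈ S, M ≤ (∑ i ∈ S.filter (fun i' => pos i' ≤ pos j), w i) → c ≤ pos j := by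
    intro j hj hFj
    apply (T.image pos).min'_le
    exact Finset.mem_image.mpr ⟨j, Finset.mem_filter.mpr ⟨hj, hFj⟩, rfl⟩
  set Fltc := ∑ j ∈ S.filter (fun j => pos j < c), w j with hFltc
  have hFltclt : Fltc < M := by
    by_contra hge
    push_neg at hge
    have hne : (S.filter (fun j => pos j < c)).Nonempty := by
      rcases Finset.eq_empty_or_nonempty (S.filter (fun j => pos j < c)) with he | h
      · exfalso; rw [hFltc, he] at hge; simp at hge; linarith
      · exact h
    obtain ⟨j', hj', hmax'⟩ := (S.filter (fun j => pos j < c)).exists_max_image pos hne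
    have hj'S : j' ∈ S := (Finset.mem_filter.mp hj').1
    have hj'lt : pos j' < c := (Finset.mem_filter.mp hj').2
    have hseteq : S.filter (fun i => pos i ≤ pos j') = S.filter (fun i => pos i < c) := by
      ext i
      simp only [Finset.mem_filter]
      constructor
      · rintro ⟨hiS, hile⟩; exact ⟨hiS, lt_of_le_of_lt hile hj'lt⟩
      · rintro ⟨hiS, hilt⟩; exact ⟨hiS, hmax' i (Finset.mem_filter.mpr ⟨hiS, hilt⟩)⟩
    have : c ≤ pos j' := by
      apply hminprop j' hj'S
      rw [hseteq]
      exact hge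
    omega
  set ρ := M - Fltc with hρ
  have hρpos : 0 < ρ := by rw [hρ]; linarith
  set b : ℤ × ℤ → ℝ := fun i =>
    if i ∈ S then (if pos i < c then w i else if pos i = c then ρ else 0) else 0 with hb
  have hbS : ∀ i ∈ S, b i = (if pos i < c then w i else if pos i = c then ρ else 0) := by
    intro i hi; rw [hb]; simp [hi]
  have hatom : ∀ i ∈ S, pos i = c → i = ic := by
    intro i hi hpi
    exact hinj hi hicS (hpi.trans hicpos.symm)
  have hfiltc : S.filter (fun i => pos i = c) = {ic} := by
    apply Finset.eq_singleton_iff_unique_mem.mpr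
    constructor
    · exact Finset.mem_filter.mpr ⟨hicS, hicpos⟩
    · intro j hj
      exact hatom j (Finset.mem_filter.mp hj).1 (Finset.mem_filter.mp hj).2
  have hpred : S.filter (fun j => pos j ≤ c)
      = (S.filter (fun j => pos j < c)) ∪ (S.filter (fun j => pos j = c)) := by
    ext i
    simp only [Finset.mem_union, Finset.mem_filter]
    constructor
    · rintro ⟨h1, h2⟩
      rcases lt_or_eq_of_le h2 with h | h
      · exact Or.inl ⟨h1, h⟩
      · exact Or.inr ⟨h1, h⟩
    · rintro (⟨h1, h2⟩ | ⟨h1, h2⟩)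
      · exact ⟨h1, le_of_lt h2⟩
      · exact ⟨h1, le_of_eq h2⟩
  have hdisj : Disjoint (S.filter (fun j => pos j < c)) (S.filter (fun j => pos j = c)) := by
    rw [Finset.disjoint_filter]
    intro i _ h1 h2
    omega
  have hFc_split : (∑ j ∈ S.filter (fun j => pos j ≤ c), w j) = Fltc + w ic := by
    rw [hpred, Finset.sum_union hdisj, hfiltc, Finset.sum_singleton, hFltc]
  have hρle : ρ ≤ w ic := by
    rw [hρ]
    rw [hFc_split] at hicF
    linarith
  refine ⟨c, ic, b, hicS, hicpos, ?_, ?_, ?_, ?_, ?_, ?_, ?_, hFltclt, hicF, hminprop⟩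
  · intro i hi; rw [hb]; simp [hi]
  · intro i hi
    rw [hbS i hi]
    split
    · exact hw0 i hi
    · split
      · exact hρpos.le
      · exact le_rfl
  · intro i hi
    rw [hbS i hi]
    split
    · exact le_rfl
    · split
      · rename_i h1 h2
        have : i = ic := hatom i hi h2
        rw [this]; exact hρle
      · exact hw0 i hi
  · rw [Finset.sum_congr rfl hbS, Finset.sum_ite]
    have h2 : (∑ i ∈ S.filter (fun i => ¬ pos i < c), (if pos i = c then ρ else 0)) = ρ := by
      rw [← Finset.sum_filter, Finset.filter_filter]
      have : (S.filter (fun a => ¬ pos a < c ∧ pos a = c)) = {ic} := by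
        rw [← hfiltc]
        apply Finset.filter_congr
        intro i _
        constructor
        · rintro ⟨_, h⟩; exact h
        · intro h; exact ⟨by omega, h⟩
      rw [this, Finset.sum_singleton]
    rw [h2, ← hFltc, hρ]
    ring
  · intro i hi hlt; rw [hbS i hi]; simp [hlt]
  · intro i hi hgt; rw [hbS i hi]
    have h1 : ¬ pos i < c := by omega
    have h2 : ¬ pos i = c := by omega
    simp [h1, h2]
  · intro i hi hpi
    rw [hbS i hi, hpi, if_neg (lt_irrefl c), if_pos rfl, hρ, hFltc]


set_option maxHeartbeats 2000000 in
lemma core (S : Finset (ℤ × ℤ)) (pos : ℤ × ℤ → ℤ) (hinj : Set.InjOn pos S)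
    (w : ℤ × ℤ → ℝ) (hw0 : ∀ i ∈ S, 0 ≤ w i) (hw2 : ∀ i ∈ S, w i ≤ 1/2)
    (hsum : ∑ i ∈ S, w i = 3/2) {ε : ℝ} (hε : 0 < ε) :
    ∃ (x : ℤ) (α : ℝ) (sB sT : ℤ × ℤ → ℝ),
      0 < α ∧ α < ε ∧
      (∀ i, i ∉ S → sB i = 0) ∧ (∀ i, i ∉ S → sT i = 0) ∧
      (∀ i ∈ S, 0 ≤ sB i ∧ sB i ≤ w i) ∧ (∀ i ∈ S, 0 ≤ sT i ∧ sT i ≤ w i) ∧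
      (∑ i ∈ S, sB i) = 1 - 2*α ∧ (∑ i ∈ S, sT i) = 1 - 2*α ∧
      (∑ i ∈ S, sB i * (pos i : ℝ)) < (x : ℝ) ∧
      (x : ℝ) < (∑ i ∈ S, sT i * (pos i : ℝ)) := by
  classical
  obtain ⟨cH, iH, bH, hiHS, hiHpos, bH_out, bH_0, bH_w, bH_sum, bH_lo, bH_hi, bH_at,
    bH_Flt, bH_Fle, bH_min⟩ :=
    exists_bot S pos hinj w hw0 (1/2) (by norm_num) (by rw [hsum]; norm_num)
  obtain ⟨c1, i1, b1, hi1S, hi1pos, b1_out, b1_0, b1_w, b1_sum, b1_lo, b1_hi, b1_at,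
    b1_Flt, b1_Fle, b1_min⟩ :=
    exists_bot S pos hinj w hw0 1 (by norm_num) (by rw [hsum]; norm_num)
  have hcHc1 : cH ≤ c1 := by
    have h := bH_min i1 hi1S (by rw [hi1pos]; linarith [b1_Fle])
    omega
  have hbHb1 : ∀ i ∈ S, bH i ≤ b1 i := by
    intro i hi
    rcases lt_trichotomy (pos i) cH with h | h | h
    · rw [bH_lo i hi h, b1_lo i hi (lt_of_lt_of_le h hcHc1)]
    · rcases lt_or_eq_of_le hcHc1 with hlt | heq
      · rw [b1_lo i hi (by omega)]
        exact bH_w i hi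
      · rw [bH_at i hi h, b1_at i hi (by omega), ← heq]
        linarith
    · rw [bH_hi i hi h]
      exact b1_0 i hi
  set P2 : ℤ × ℤ → ℝ := fun i => b1 i - bH i with hP2
  set P3 : ℤ × ℤ → ℝ := fun i => w i - b1 i with hP3
  set T1 : ℤ × ℤ → ℝ := fun i => w i - bH i with hT1
  -- masses
  have hP2sum : ∑ i ∈ S, P2 i = 1/2 := by
    rw [hP2]; rw [Finset.sum_sub_distrib, bH_sum, b1_sum]; norm_num
  have hP3sum : ∑ i ∈ S, P3 i = 1/2 := by
    rw [hP3]; rw [Finset.sum_sub_distrib, b1_sum, hsum]; norm_num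
  have hT1sum : ∑ i ∈ S, T1 i = 1 := by
    rw [hT1]; rw [Finset.sum_sub_distrib, bH_sum, hsum]; norm_num
  -- supports
  have hP2_0 : ∀ i ∈ S, 0 ≤ P2 i := by
    intro i hi; rw [hP2]; simp only []; linarith [hbHb1 i hi]
  have hP3_0 : ∀ i ∈ S, 0 ≤ P3 i := by
    intro i hi; rw [hP3]; simp only []; linarith [b1_w i hi]
  have hT1_0 : ∀ i ∈ S, 0 ≤ T1 i := by
    intro i hi; rw [hT1]; simp only []; linarith [bH_w i hi]
  have hbH_supp : ∀ i ∈ S, bH i ≠ 0 → pos i ≤ cH := by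
    intro i hi h
    by_contra hc
    exact h (bH_hi i hi (by omega))
  have hP2_hi : ∀ i ∈ S, c1 < pos i → P2 i = 0 := by
    intro i hi h
    rw [hP2]; simp only []
    rw [b1_hi i hi h, bH_hi i hi (by omega)]
    ring
  have hP2_lo : ∀ i ∈ S, pos i < cH → P2 i = 0 := by
    intro i hi h
    rw [hP2]; simp only []
    rw [b1_lo i hi (by omega), bH_lo i hi h]
    ring
  have hP3_lo : ∀ i ∈ S, pos i < c1 → P3 i = 0 := by
    intro i hi h
    rw [hP3]; simp only []
    rw [b1_lo i hi h]
    ring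
  -- pack applications
  have pack1 : ∑ i ∈ S, bH i * (pos i : ℝ) + 1/2 ≤ ∑ i ∈ S, P2 i * (pos i : ℝ) := by
    apply pack S pos hinj bH P2 cH bH_0 hP2_0 hbH_supp
    · intro i hi h
      by_contra hc
      exact h (hP2_lo i hi (by omega))
    · exact bH_sum
    · exact hP2sum
    · intro i hi _
      have := b1_w i hi
      have := hw2 i hi
      rw [hP2]; simp only []
      linarith
  have pack2 : ∑ i ∈ S, P2 i * (pos i : ℝ) + 1/2 ≤ ∑ i ∈ S, P3 i * (pos i : ℝ) := by
    apply pack S pos hinj P2 P3 c1 hP2_0 hP3_0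
    · intro i hi h
      by_contra hc
      exact h (hP2_hi i hi (by omega))
    · intro i hi h
      by_contra hc
      exact h (hP3_lo i hi (by omega))
    · exact hP2sum
    · exact hP3sum
    · intro i hi _
      have := bH_0 i hi
      have := hw2 i hi
      rw [hP2, hP3]; simp only []
      linarith
  set Bsum := ∑ i ∈ S, b1 i * (pos i : ℝ) with hBsum
  set Tsum := ∑ i ∈ S, T1 i * (pos i : ℝ) with hTsum
  have hBsplit : Bsum = ∑ i ∈ S, bH i * (pos i : ℝ) + ∑ i ∈ S, P2 i * (pos i : ℝ) := by
    rw [hBsum, ← Finset.sum_add_distrib]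
    apply Finset.sum_congr rfl
    intro i _
    rw [hP2]; simp only []; ring
  have hTsplit : Tsum = ∑ i ∈ S, P2 i * (pos i : ℝ) + ∑ i ∈ S, P3 i * (pos i : ℝ) := by
    rw [hTsum, ← Finset.sum_add_distrib]
    apply Finset.sum_congr rfl
    intro i _
    rw [hP2, hP3, hT1]; simp only []; ring
  have hspread : Bsum + 1 ≤ Tsum := by
    rw [hBsplit, hTsplit]
    linarith
  -- atoms
  have hρ1pos : 0 < b1 i1 := by
    rw [b1_at i1 hi1S hi1pos]
    linarith
  have hP2i1pos : 0 < P2 i1 := by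
    rw [hP2]; simp only []
    rcases lt_or_eq_of_le hcHc1 with hlt | heq
    · rw [bH_hi i1 hi1S (by omega)]
      linarith
    · rw [bH_at i1 hi1S (by omega), b1_at i1 hi1S hi1pos, ← heq]
      linarith
  have hT1i1pos : 0 < T1 i1 := by
    have h1 : P2 i1 ≤ T1 i1 := by
      rw [hP2, hT1]; simp only []
      linarith [b1_w i1 hi1S]
    linarith
  set Tsupp := S.filter (fun i => T1 i ≠ 0) with hTsupp
  have hTsne : Tsupp.Nonempty := ⟨i1, Finset.mem_filter.mpr ⟨hi1S, ne_of_gt hT1i1pos⟩⟩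
  have hTimg : (Tsupp.image pos).Nonempty := hTsne.image pos
  set qv := (Tsupp.image pos).min' hTimg with hqv
  obtain ⟨iq, hiqT, hiqpos⟩ := Finset.mem_image.mp ((Tsupp.image pos).min'_mem hTimg)
  have hiqS : iq ∈ S := (Finset.mem_filter.mp hiqT).1
  have hρ2pos : 0 < T1 iq := by
    have := (Finset.mem_filter.mp hiqT).2
    rcases lt_or_eq_of_le (hT1_0 iq hiqS) with h | h
    · exact h
    · exact absurd h.symm this
  have hqvmin : ∀ i ∈ S, T1 i ≠ 0 → qv ≤ pos i := by
    intro i hi h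
    apply (Tsupp.image pos).min'_le
    exact Finset.mem_image.mpr ⟨i, Finset.mem_filter.mpr ⟨hi, h⟩, rfl⟩
  have hqvc1 : qv ≤ c1 := by
    rw [← hi1pos]
    exact hqvmin i1 hi1S (ne_of_gt hT1i1pos)
  -- key selection of x and α
  have key : ∃ (x : ℤ) (α : ℝ), 0 < α ∧ α < ε ∧ 2*α ≤ b1 i1 ∧ 2*α ≤ T1 iq ∧
      Bsum - 2*α*(c1:ℝ) < (x:ℝ) ∧ (x:ℝ) < Tsum - 2*α*(qv:ℝ) := by
    by_cases hex : ∃ x : ℤ, Bsum < (x:ℝ) ∧ (x:ℝ) < Tsum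
    · obtain ⟨x, hx1, hx2⟩ := hex
      set K1 : ℝ := |(c1:ℝ)| + 1 with hK1
      set K2 : ℝ := |(qv:ℝ)| + 1 with hK2
      have hK1pos : 0 < K1 := by rw [hK1]; positivity
      have hK2pos : 0 < K2 := by rw [hK2]; positivity
      set α := min ε (min (b1 i1) (min (T1 iq) (min ((x - Bsum)/K1) ((Tsum - x)/K2)))) / 4
        with hα
      have hα1 : α ≤ ε / 4 := by
        rw [hα]; apply div_le_div_of_nonneg_right ?_ (by norm_num)
        · exact min_le_left _ _
      have hα2 : 4*α ≤ b1 i1 := by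
        rw [hα]
        have : min ε (min (b1 i1) (min (T1 iq) (min ((x - Bsum)/K1) ((Tsum - x)/K2)))) ≤ b1 i1 :=
          le_trans (min_le_right _ _) (min_le_left _ _)
        linarith
      have hα3 : 4*α ≤ T1 iq := by
        rw [hα]
        have : min ε (min (b1 i1) (min (T1 iq) (min ((x - Bsum)/K1) ((Tsum - x)/K2)))) ≤ T1 iq :=
          le_trans (min_le_right _ _) (le_trans (min_le_right _ _) (min_le_left _ _))
        linarith
      have hα4 : 4*α ≤ (x - Bsum)/K1 := by
        rw [hα]
        have : min ε (min (b1 i1) (min (T1 iq) (min ((x - Bsum)/K1) ((Tsum - x)/K2))))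
            ≤ (x - Bsum)/K1 :=
          le_trans (min_le_right _ _) (le_trans (min_le_right _ _)
            (le_trans (min_le_right _ _) (min_le_left _ _)))
        linarith
      have hα5 : 4*α ≤ (Tsum - x)/K2 := by
        rw [hα]
        have : min ε (min (b1 i1) (min (T1 iq) (min ((x - Bsum)/K1) ((Tsum - x)/K2))))
            ≤ (Tsum - x)/K2 :=
          le_trans (min_le_right _ _) (le_trans (min_le_right _ _)
            (le_trans (min_le_right _ _) (min_le_right _ _)))
        linarith
      have hαpos : 0 < α := by
        rw [hα]
        apply div_pos _ (by norm_num)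
        apply lt_min hε
        apply lt_min hρ1pos
        apply lt_min hρ2pos
        apply lt_min (div_pos (by linarith) hK1pos) (div_pos (by linarith) hK2pos)
      refine ⟨x, α, hαpos, by linarith, by linarith, by linarith, ?_, ?_⟩
      · have h1 : 2*α*(c1:ℝ) ≥ -(2*α*K1) := by
          have : -(K1) ≤ (c1:ℝ) := by
            rw [hK1]
            have := neg_abs_le ((c1:ℝ))
            linarith
          nlinarith [hαpos]
        have h2 : 2*α*K1 < x - Bsum := by
          rw [le_div_iff₀ hK1pos] at hα4
          nlinarith [hαpos, hK1pos]
        linarith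
      · have h1 : 2*α*(qv:ℝ) ≤ 2*α*K2 := by
          have : (qv:ℝ) ≤ K2 := by
            rw [hK2]
            have := le_abs_self ((qv:ℝ))
            linarith
          nlinarith [hαpos]
        have h2 : 2*α*K2 < Tsum - x := by
          rw [le_div_iff₀ hK2pos] at hα5
          nlinarith [hαpos, hK2pos]
        linarith
    · -- bad case
      push_neg at hex
      set n := ⌊Bsum⌋ with hn
      have h1 : (n:ℝ) ≤ Bsum := Int.floor_le Bsum
      have h2 : Bsum < (n:ℝ)+1 := Int.lt_floor_add_one Bsum
      have hTle : Tsum ≤ (n:ℝ)+1 := by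
        have := hex (n+1)
        push_cast at this
        by_contra hc
        push_neg at hc
        exact absurd (this (by linarith)) (by push_neg; linarith)
      have hBn : Bsum = (n:ℝ) := by linarith
      have hTn : Tsum = (n:ℝ)+1 := by linarith
      by_cases hc1p : 1 ≤ c1
      · -- x = n
        set α := min ε (min (b1 i1) (min (T1 iq) (1/(|(qv:ℝ)|+1)))) / 4 with hα
        have hαpos : 0 < α := by
          rw [hα]
          apply div_pos _ (by norm_num)
          apply lt_min hε
          apply lt_min hρ1pos
          apply lt_min hρ2pos
          positivity
        have hα1 : α ≤ ε/4 := by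
          rw [hα]; apply div_le_div_of_nonneg_right (min_le_left _ _) (by norm_num)
        have hα2 : 4*α ≤ b1 i1 := by
          rw [hα]
          have h : min ε (min (b1 i1) (min (T1 iq) (1/(|(qv:ℝ)|+1)))) ≤ b1 i1 :=
            le_trans (min_le_right _ _) (min_le_left _ _)
          linarith
        have hα3 : 4*α ≤ T1 iq := by
          rw [hα]
          have h : min ε (min (b1 i1) (min (T1 iq) (1/(|(qv:ℝ)|+1)))) ≤ T1 iq :=
            le_trans (min_le_right _ _) (le_trans (min_le_right _ _) (min_le_left _ _))
          linarith
        have hα4 : 4*α ≤ 1/(|(qv:ℝ)|+1) := by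
          rw [hα]
          have h : min ε (min (b1 i1) (min (T1 iq) (1/(|(qv:ℝ)|+1)))) ≤ 1/(|(qv:ℝ)|+1) :=
            le_trans (min_le_right _ _) (le_trans (min_le_right _ _) (min_le_right _ _))
          linarith
        refine ⟨n, α, hαpos, by linarith, by linarith, by linarith, ?_, ?_⟩
        · rw [hBn]
          have : 0 < 2*α*(c1:ℝ) := by
            have : (1:ℝ) ≤ (c1:ℝ) := by exact_mod_cast hc1p
            nlinarith [hαpos]
          linarith
        · rw [hTn]
          have hq : 2*α*(qv:ℝ) ≤ 2*α*|(qv:ℝ)| := by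
            have := le_abs_self ((qv:ℝ))
            nlinarith [hαpos]
          have h41 : 4*α*(|(qv:ℝ)|+1) ≤ 1 := by
            rw [le_div_iff₀ (by positivity : (0:ℝ) < |(qv:ℝ)|+1)] at hα4
            linarith
          nlinarith [hαpos, abs_nonneg ((qv:ℝ))]
      · by_cases hqvn : qv ≤ -1
        · -- x = n+1
          set α := min ε (min (b1 i1) (min (T1 iq) (1/(|(c1:ℝ)|+1)))) / 4 with hα
          have hαpos : 0 < α := by
            rw [hα]
            apply div_pos _ (by norm_num)
            apply lt_min hε
            apply lt_min hρ1pos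
            apply lt_min hρ2pos
            positivity
          have hα1 : α ≤ ε/4 := by
            rw [hα]; apply div_le_div_of_nonneg_right (min_le_left _ _) (by norm_num)
          have hα2 : 4*α ≤ b1 i1 := by
            rw [hα]
            have h : min ε (min (b1 i1) (min (T1 iq) (1/(|(c1:ℝ)|+1)))) ≤ b1 i1 :=
              le_trans (min_le_right _ _) (min_le_left _ _)
            linarith
          have hα3 : 4*α ≤ T1 iq := by
            rw [hα]
            have h : min ε (min (b1 i1) (min (T1 iq) (1/(|(c1:ℝ)|+1)))) ≤ T1 iq :=
              le_trans (min_le_right _ _) (le_trans (min_le_right _ _) (min_le_left _ _))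
            linarith
          have hα4 : 4*α ≤ 1/(|(c1:ℝ)|+1) := by
            rw [hα]
            have h : min ε (min (b1 i1) (min (T1 iq) (1/(|(c1:ℝ)|+1)))) ≤ 1/(|(c1:ℝ)|+1) :=
              le_trans (min_le_right _ _) (le_trans (min_le_right _ _) (min_le_right _ _))
            linarith
          refine ⟨n+1, α, hαpos, by linarith, by linarith, by linarith, ?_, ?_⟩
          · push_cast
            rw [hBn]
            have hcb : 2*α*(c1:ℝ) ≥ -(2*α*|(c1:ℝ)|) := by
              have := neg_abs_le ((c1:ℝ))
              nlinarith [hαpos]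
            have h41 : 4*α*(|(c1:ℝ)|+1) ≤ 1 := by
              rw [le_div_iff₀ (by positivity : (0:ℝ) < |(c1:ℝ)|+1)] at hα4
              linarith
            nlinarith [hαpos, abs_nonneg ((c1:ℝ))]
          · push_cast
            rw [hTn]
            have : 2*α*(qv:ℝ) < 0 := by
              have : (qv:ℝ) ≤ -1 := by exact_mod_cast hqvn
              nlinarith [hαpos]
            linarith
        · -- impossible subcase
          exfalso
          push_neg at hc1p hqvn
          have hc10 : c1 ≤ 0 := by omega
          have hqv0 : 0 ≤ qv := by omega
          have hqveq : qv = 0 ∧ c1 = 0 := by omega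
          obtain ⟨hqv00, hc100⟩ := hqveq
          -- P2 is concentrated at i1
          have hP2single : ∀ i ∈ S, P2 i ≠ 0 → i = i1 := by
            intro i hi h
            have hle : pos i ≤ c1 := by
              by_contra hc
              exact h (hP2_hi i hi (by omega))
            have hge : qv ≤ pos i := by
              apply hqvmin i hi
              have h1 := hP2_0 i hi
              have h2 : P2 i ≤ T1 i := by
                rw [hP2, hT1]; simp only []
                linarith [b1_w i hi]
              intro hT0
              rw [hT0] at h2
              exact h (le_antisymm h2 h1)
            have : pos i = c1 := by omega
            exact hinj hi hi1S (this.trans hi1pos.symm)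
          have hP2val : P2 i1 = 1/2 := by
            have : ∑ i ∈ S, P2 i = P2 i1 := by
              apply Finset.sum_eq_single_of_mem i1 hi1S
              intro j hj hne
              by_contra hc
              exact hne (hP2single j hj hc)
            rw [← this, hP2sum]
          have hbHi1 : bH i1 = 0 := by
            have h1 := b1_w i1 hi1S
            have h2 := hw2 i1 hi1S
            have h3 := bH_0 i1 hi1S
            rw [hP2] at hP2val; simp only [] at hP2val
            linarith
          have hb1i1 : b1 i1 = 1/2 := by
            rw [hP2] at hP2val; simp only [] at hP2val
            linarith
          -- Bsum ≤ -1/2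
          have hbH_neg : ∀ i ∈ S, bH i ≠ 0 → pos i ≤ -1 := by
            intro i hi h
            have hle : pos i ≤ cH := hbH_supp i hi h
            rcases lt_or_eq_of_le (show pos i ≤ 0 by omega) with hlt | heq
            · omega
            · exfalso
              have : i = i1 := hinj hi hi1S (by rw [heq, hi1pos, hc100])
              rw [this] at h
              exact h hbHi1
          have hbHpos_le : ∑ i ∈ S, bH i * (pos i : ℝ) ≤ -(1/2) := by
            have h1 : ∑ i ∈ S, bH i * (pos i : ℝ) ≤ ∑ i ∈ S, -(bH i) := by
              apply Finset.sum_le_sum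
              intro i hi
              rcases eq_or_ne (bH i) 0 with h0 | h0
              · rw [h0]; simp
              · have := hbH_neg i hi h0
                have hc : (pos i : ℝ) ≤ -1 := by exact_mod_cast this
                have := bH_0 i hi
                nlinarith
            rw [Finset.sum_neg_distrib] at h1
            rw [bH_sum] at h1
            linarith
          have hP2pos0 : ∑ i ∈ S, P2 i * (pos i : ℝ) = 0 := by
            apply Finset.sum_eq_zero
            intro i hi
            rcases eq_or_ne (P2 i) 0 with h0 | h0
            · rw [h0]; ring
            · have : i = i1 := hP2single i hi h0
              rw [this, hi1pos, hc100]
              simp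
          have hBle : Bsum ≤ -(1/2) := by
            rw [hBsplit, hP2pos0]
            linarith
          -- Tsum ≥ 1/2
          have hP3_ge1 : ∀ i ∈ S, P3 i ≠ 0 → 1 ≤ pos i := by
            intro i hi h
            have hge : c1 ≤ pos i := by
              by_contra hc
              exact h (hP3_lo i hi (by omega))
            rcases lt_or_eq_of_le hge with hlt | heq
            · omega
            · exfalso
              have : i = i1 := hinj hi hi1S (by rw [← heq, hi1pos])
              rw [this] at h
              apply h
              rw [hP3]; simp only []
              have := hw2 i1 hi1S
              rw [hb1i1]
              have hwi1 : w i1 = 1/2 := by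
                have := b1_w i1 hi1S
                rw [hb1i1] at this
                linarith
              rw [hwi1]; ring
          have hP3pos_ge : (1:ℝ)/2 ≤ ∑ i ∈ S, P3 i * (pos i : ℝ) := by
            have h1 : ∑ i ∈ S, P3 i ≤ ∑ i ∈ S, P3 i * (pos i : ℝ) := by
              apply Finset.sum_le_sum
              intro i hi
              rcases eq_or_ne (P3 i) 0 with h0 | h0
              · rw [h0]; simp
              · have := hP3_ge1 i hi h0
                have hc : (1:ℝ) ≤ (pos i : ℝ) := by exact_mod_cast this
                have := hP3_0 i hi
                nlinarith
            rw [hP3sum] at h1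
            linarith
          have hTge : (1:ℝ)/2 ≤ Tsum := by
            rw [hTsplit, hP2pos0]
            linarith
          -- n ≤ -1 and n ≥ 0
          have hn1 : n ≤ -1 := by
            have : (n:ℝ) ≤ -(1/2) := by rw [← hBn]; exact hBle
            by_contra hc
            push_neg at hc
            have : (0:ℝ) ≤ (n:ℝ) := by exact_mod_cast (by omega : 0 ≤ n)
            linarith
          have hn2 : 0 ≤ n := by
            have : (1:ℝ)/2 ≤ (n:ℝ)+1 := by rw [← hTn]; exact hTge
            by_contra hc
            push_neg at hc
            have : (n:ℝ) + 1 ≤ 0 := by exact_mod_cast (by omega : n + 1 ≤ 0)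
            linarith
          omega
  -- build sB sT from key
  obtain ⟨x, α, hαpos, hαε, hαb1, hαT1, hxlo, hxhi⟩ := key
  set sB : ℤ × ℤ → ℝ := fun i => b1 i - 2*α*(if i = i1 then 1 else 0) with hsB
  set sT : ℤ × ℤ → ℝ := fun i =>
    if i ∈ S then (T1 i - 2*α*(if i = iq then 1 else 0)) else 0 with hsT
  have hsBdef : ∀ i, sB i = b1 i - 2*α*(if i = i1 then 1 else 0) := fun i => rfl
  have hsTdefS : ∀ i ∈ S, sT i = T1 i - 2*α*(if i = iq then 1 else 0) := by
    intro i hi; rw [hsT]; simp only [if_pos hi]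
  refine ⟨x, α, sB, sT, hαpos, hαε, ?_, ?_, ?_, ?_, ?_, ?_, ?_, ?_⟩
  · intro i hi
    rw [hsBdef i, b1_out i hi, if_neg (fun h => hi (by rw [h]; exact hi1S))]
    ring
  · intro i hi
    rw [hsT]; simp only [if_neg hi]
  · intro i hi
    rw [hsBdef i]
    constructor
    · split
      · rename_i h
        rw [h]
        linarith
      · linarith [b1_0 i hi]
    · split
      · rename_i h
        have := b1_w i hi
        nlinarith [hαpos]
      · have := b1_w i hi
        nlinarith [hαpos]
  · intro i hi
    rw [hsTdefS i hi]
    have hTw : T1 i ≤ w i := by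
      rw [hT1]; simp only []
      linarith [bH_0 i hi]
    constructor
    · split
      · rename_i h
        rw [h]
        linarith
      · linarith [hT1_0 i hi]
    · split
      · nlinarith [hαpos]
      · nlinarith [hαpos]
  · rw [Finset.sum_congr rfl (fun i _ => hsBdef i), Finset.sum_sub_distrib, b1_sum]
    have h2 : ∑ i ∈ S, 2*α*(if i = i1 then (1:ℝ) else 0) = 2*α := by
      rw [← Finset.mul_sum, Finset.sum_ite_eq' S i1 (fun _ => (1:ℝ)), if_pos hi1S]
      ring
    rw [h2]
  · rw [Finset.sum_congr rfl hsTdefS, Finset.sum_sub_distrib, hT1sum]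
    have h2 : ∑ i ∈ S, 2*α*(if i = iq then (1:ℝ) else 0) = 2*α := by
      rw [← Finset.mul_sum, Finset.sum_ite_eq' S iq (fun _ => (1:ℝ)), if_pos hiqS]
      ring
    rw [h2]
  · have hterm : ∀ i ∈ S, sB i * (pos i : ℝ)
        = b1 i * (pos i : ℝ) - (if i = i1 then 2*α*((pos i : ℤ):ℝ) else 0) := by
      intro i _
      rw [hsBdef i]
      split <;> ring
    have heq : ∑ i ∈ S, sB i * (pos i : ℝ) = Bsum - 2*α*(c1:ℝ) := by
      rw [Finset.sum_congr rfl hterm, Finset.sum_sub_distrib]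
      have h2 : ∑ i ∈ S, (if i = i1 then 2*α*((pos i:ℤ):ℝ) else 0) = 2*α*(c1:ℝ) := by
        rw [Finset.sum_ite_eq' S i1 (fun i => 2*α*((pos i : ℤ):ℝ)), if_pos hi1S, hi1pos]
      rw [h2, hBsum]
    rw [heq]
    exact hxlo
  · have hterm : ∀ i ∈ S, sT i * (pos i : ℝ)
        = T1 i * (pos i : ℝ) - (if i = iq then 2*α*((pos i : ℤ):ℝ) else 0) := by
      intro i hi
      rw [hsTdefS i hi]
      split <;> ring
    have heq : ∑ i ∈ S, sT i * (pos i : ℝ) = Tsum - 2*α*(qv:ℝ) := by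
      rw [Finset.sum_congr rfl hterm, Finset.sum_sub_distrib]
      have h2 : ∑ i ∈ S, (if i = iq then 2*α*((pos i:ℤ):ℝ) else 0) = 2*α*(qv:ℝ) := by
        rw [Finset.sum_ite_eq' S iq (fun i => 2*α*((pos i : ℤ):ℝ)), if_pos hiqS, hiqpos]
      rw [h2, hTsum]
    rw [heq]
    exact hxhi


set_option maxHeartbeats 1000000 in
lemma diamond {K : Set (ℝ × ℝ)} (hK : Convex ℝ K) (G D H : ℝ × ℝ)
    (hdet : D.1 * H.2 - D.2 * H.1 ≠ 0)
    {b1 b2 g : ℝ} (hb1 : 0 < b1) (hb2 : 0 < b2) (hg : 0 < g)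
    (h1 : G - b1 • D ∈ K) (h2 : G + b2 • D ∈ K)
    (h3 : G + g • H ∈ K) (h4 : G - g • H ∈ K) :
    G ∈ interior K := by
  set Δ := D.1 * H.2 - D.2 * H.1 with hΔ
  have habs : 0 < |Δ| := abs_pos.mpr hdet
  set C := (|D.1| + |D.2| + |H.1| + |H.2| + 1) / |Δ| with hC
  have hCpos : 0 < C := by positivity
  set m0 := min g (min b1 b2) with hm0
  have hm0pos : 0 < m0 := lt_min hg (lt_min hb1 hb2)
  set ε := m0 / (2 * C + 1) with hε
  have hεpos : 0 < ε := by positivity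
  rw [mem_interior]
  refine ⟨Metric.ball G ε, ?_, Metric.isOpen_ball, Metric.mem_ball_self hεpos⟩
  intro y hy
  set v : ℝ × ℝ := y - G with hv
  have hvnorm : ‖v‖ < ε := by
    rw [hv, ← dist_eq_norm]
    exact Metric.mem_ball.mp hy
  have hvnn : (0:ℝ) ≤ ‖v‖ := norm_nonneg v
  have hv1 : |v.1| ≤ ‖v‖ := by simpa using norm_fst_le v
  have hv2 : |v.2| ≤ ‖v‖ := by simpa using norm_snd_le v
  set s := (v.1 * H.2 - v.2 * H.1) / Δ with hs
  set t := (D.1 * v.2 - D.2 * v.1) / Δ with ht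
  have hCΔ : C * |Δ| = |D.1| + |D.2| + |H.1| + |H.2| + 1 := by
    rw [hC, div_mul_cancel₀ _ (ne_of_gt habs)]
  have habss : ∀ a b c d : ℝ, |a * b - c * d| ≤ |a| * |b| + |c| * |d| := by
    intro a b c d
    calc |a * b - c * d| ≤ |a * b| + |c * d| := abs_sub _ _
    _ = |a| * |b| + |c| * |d| := by rw [abs_mul, abs_mul]
  have hsb : |s| * |Δ| ≤ ‖v‖ * (C * |Δ|) := by
    rw [hs, abs_div, div_mul_cancel₀ _ (ne_of_gt habs), hCΔ]
    calc |v.1 * H.2 - v.2 * H.1| ≤ |v.1| * |H.2| + |v.2| * |H.1| := habss _ _ _ _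
    _ ≤ ‖v‖ * (|D.1| + |D.2| + |H.1| + |H.2| + 1) := by
        nlinarith [abs_nonneg H.1, abs_nonneg H.2, abs_nonneg D.1, abs_nonneg D.2,
          abs_nonneg v.1, abs_nonneg v.2]
  have htb : |t| * |Δ| ≤ ‖v‖ * (C * |Δ|) := by
    rw [ht, abs_div, div_mul_cancel₀ _ (ne_of_gt habs), hCΔ]
    calc |D.1 * v.2 - D.2 * v.1| ≤ |D.1| * |v.2| + |D.2| * |v.1| := habss _ _ _ _
    _ ≤ ‖v‖ * (|D.1| + |D.2| + |H.1| + |H.2| + 1) := by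
        nlinarith [abs_nonneg H.1, abs_nonneg H.2, abs_nonneg D.1, abs_nonneg D.2,
          abs_nonneg v.1, abs_nonneg v.2]
  have hsC : |s| ≤ C * ‖v‖ := by
    have := (mul_le_mul_iff_left₀ habs).mp (by linarith [hsb] : |s| * |Δ| ≤ (C * ‖v‖) * |Δ|)
    exact this
  have htC : |t| ≤ C * ‖v‖ := by
    have := (mul_le_mul_iff_left₀ habs).mp (by linarith [htb] : |t| * |Δ| ≤ (C * ‖v‖) * |Δ|)
    exact this
  have hkey : C * ‖v‖ < m0 / 2 := by
    have h1' : C * ‖v‖ < C * ε := by exact (mul_lt_mul_iff_right₀ hCpos).mpr hvnorm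
    have h2C : (0:ℝ) < 2 * C + 1 := by linarith
    have : C * ε ≤ m0 / 2 := by
      rw [hε, ← mul_div_assoc, div_le_div_iff₀ h2C (by norm_num : (0:ℝ) < 2)]
      nlinarith [hm0pos.le]
    linarith
  -- decomposition
  have hdecomp : v = s • D + t • H := by
    have hΔne : Δ ≠ 0 := hdet
    apply Prod.ext <;>
      simp only [Prod.smul_fst, Prod.smul_snd, Prod.fst_add, Prod.snd_add, smul_eq_mul,
        hs, ht] <;>
      field_simp <;> ring
  set θ := |t| / g with hθ
  have hθ0 : 0 ≤ θ := by positivity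
  have hθhalf : θ ≤ 1/2 := by
    rw [hθ, div_le_iff₀ hg]
    have hmg : m0 ≤ g := min_le_left _ _
    have : |t| < m0 / 2 := lt_of_le_of_lt htC hkey
    linarith
  set s' := s / (1 - θ) with hs'
  have h1θ : (1:ℝ)/2 ≤ 1 - θ := by linarith
  have h1θpos : 0 < 1 - θ := by linarith
  have hs'b : |s'| < m0 := by
    rw [hs', abs_div, abs_of_pos h1θpos, div_lt_iff₀ h1θpos]
    have hsm : |s| < m0 / 2 := lt_of_le_of_lt hsC hkey
    have : m0 * (1/2) ≤ m0 * (1 - θ) := by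
      apply mul_le_mul_of_nonneg_left h1θ hm0pos.le
    linarith
  set lam := (s' + b1) / (b1 + b2) with hlam
  have hlam0 : 0 ≤ lam := by
    apply div_nonneg _ (by linarith)
    have : -b1 < s' := by
      have := neg_abs_le s'
      have hm : m0 ≤ b1 := le_trans (min_le_right _ _) (min_le_left _ _)
      linarith [hs'b]
    linarith
  have hlam1 : lam ≤ 1 := by
    rw [hlam, div_le_one (by linarith)]
    have : s' < b2 := by
      have := le_abs_self s'
      have hm : m0 ≤ b2 := le_trans (min_le_right _ _) (min_le_right _ _)
      linarith [hs'b]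
    linarith
  have hzK : (1 - lam) • (G - b1 • D) + lam • (G + b2 • D) ∈ K :=
    hK h1 h2 (by linarith) hlam0 (by ring)
  have hzeq : (1 - lam) • (G - b1 • D) + lam • (G + b2 • D) = G + s' • D := by
    have hls : lam * (b1 + b2) - b1 = s' := by
      rw [hlam]; field_simp; ring
    have : (1 - lam) • (G - b1 • D) + lam • (G + b2 • D)
        = G + (lam * (b1 + b2) - b1) • D := by
      module
    rw [this, hls]
  rw [hzeq] at hzK
  rcases le_or_gt 0 t with htpos | htneg
  · have habs_t : |t| = t := abs_of_nonneg htpos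
    have hyK : θ • (G + g • H) + (1 - θ) • (G + s' • D) ∈ K :=
      hK h3 hzK hθ0 (by linarith) (by ring)
    have : θ • (G + g • H) + (1 - θ) • (G + s' • D) = y := by
      have hθg : θ * g = t := by rw [hθ, habs_t]; field_simp
      have hss : (1 - θ) * s' = s := by rw [hs']; field_simp
      have : θ • (G + g • H) + (1 - θ) • (G + s' • D)
          = G + ((θ * g) • H + ((1-θ) * s') • D) := by module
      rw [this, hθg, hss]
      have : y = G + v := by rw [hv]; abel
      rw [this, hdecomp]
      module
    rwa [this] at hyK
  · have habs_t : |t| = -t := abs_of_neg htneg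
    have hyK : θ • (G - g • H) + (1 - θ) • (G + s' • D) ∈ K :=
      hK h4 hzK hθ0 (by linarith) (by ring)
    have : θ • (G - g • H) + (1 - θ) • (G + s' • D) = y := by
      have hθg : θ * g = -t := by rw [hθ, habs_t]; field_simp
      have hss : (1 - θ) * s' = s := by rw [hs']; field_simp
      have : θ • (G - g • H) + (1 - θ) • (G + s' • D)
          = G + ((-(θ * g)) • H + ((1-θ) * s') • D) := by module
      rw [this, hθg, hss]
      have : y = G + v := by rw [hv]; abel
      rw [this, hdecomp]
      module
    rwa [this] at hyK


lemma convex_sigmaR (A : (ℤ × ℤ) →₀ ℝ) : Convex ℝ (sigmaR 1 A) := by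
  intro x hx y hy a b ha hb hab
  obtain ⟨t1, ht1, hs1, hm1⟩ := hx
  obtain ⟨t2, ht2, hs2, hm2⟩ := hy
  refine ⟨fun p => a * t1 p + b * t2 p, ?_, ?_, ?_⟩
  · intro p
    refine ⟨by have := (ht1 p).1; have := (ht2 p).1; positivity, ?_⟩
    calc a * t1 p + b * t2 p ≤ a * A p + b * A p := by
          have h1 := (ht1 p).2; have h2 := (ht2 p).2
          have := mul_le_mul_of_nonneg_left h1 ha
          have := mul_le_mul_of_nonneg_left h2 hb
          linarith
    _ = A p := by rw [← add_mul, hab, one_mul]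
  · rw [Finset.sum_add_distrib, ← Finset.mul_sum, ← Finset.mul_sum, hs1, hs2]
    simpa using hab
  · have : (∑ p ∈ A.support, (a * t1 p + b * t2 p) • toR2 p)
        = a • (∑ p ∈ A.support, t1 p • toR2 p) + b • (∑ p ∈ A.support, t2 p • toR2 p) := by
      rw [Finset.smul_sum, Finset.smul_sum, ← Finset.sum_add_distrib]
      congr 1; funext p
      rw [add_smul, smul_smul, smul_smul]
    rw [this, hm1, hm2]


lemma toR2_injective : Function.Injective toR2 := by
  intro a b h
  simp only [toR2, Prod.ext_iff] at h
  exact Prod.ext (by exact_mod_cast h.1) (by exact_mod_cast h.2)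

lemma toR2_lin (z m d : ℤ × ℤ) (k : ℤ) (h1 : z.1 = m.1 + k * d.1) (h2 : z.2 = m.2 + k * d.2) :
    toR2 z = toR2 m + (k : ℝ) • toR2 d := by
  apply Prod.ext
  · show (z.1 : ℝ) = (m.1 : ℝ) + (k : ℝ) * (d.1 : ℝ)
    exact_mod_cast congrArg (Int.cast : ℤ → ℝ) h1
  · show (z.2 : ℝ) = (m.2 : ℝ) + (k : ℝ) * (d.2 : ℝ)
    exact_mod_cast congrArg (Int.cast : ℤ → ℝ) h2

set_option maxHeartbeats 2000000 in
lemma gtmt (A : (ℤ × ℤ) →₀ ℝ)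
    (hnonneg : ∀ a, 0 ≤ A a)
    (hlen : (∑ a ∈ A.support, A a) = 3.99)
    (hmax : ∀ a, A a ≤ 1 / 2)
    (hline : ∀ q w : ℝ × ℝ, w ≠ 0 → lineMult A q w ≤ 3 / 2)
    (hrepl : ReplacementClosed A)
    (hnoint : ¬ ∃ x : ℤ × ℤ, toR2 x ∈ interior (sigmaR 1 A)) :
    ∀ u v m : ℤ × ℤ, A u ≠ 0 → A v ≠ 0 → u ≠ v → u + v = m + m → A m = 1/2 := by
  intro u v m hAu hAv huv hmid
  by_contra hm
  have hAu' : 0 < A u := lt_of_le_of_ne (hnonneg u) (Ne.symm hAu)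
  have hAv' : 0 < A v := lt_of_le_of_ne (hnonneg v) (Ne.symm hAv)
  have hmid1 : u.1 + v.1 = m.1 + m.1 := congrArg Prod.fst hmid
  have hmid2 : u.2 + v.2 = m.2 + m.2 := congrArg Prod.snd hmid
  have htoRmid : toR2 u + toR2 v = toR2 m + toR2 m := by
    simp only [toR2, Prod.ext_iff, Prod.fst_add, Prod.snd_add]
    constructor <;> push_cast <;> [exact_mod_cast congrArg (Int.cast : ℤ → ℝ) hmid1;
      exact_mod_cast congrArg (Int.cast : ℤ → ℝ) hmid2]
  have hw0 : toR2 v - toR2 u ≠ 0 := by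
    intro h
    exact huv (toR2_injective (by linear_combination (norm := module) -h))
  -- third point off the line u v
  have hoffsum : ∃ p, p ∈ A.support ∧ A p ≠ 0 ∧
      ¬ (∃ r : ℝ, toR2 p = toR2 u + r • (toR2 v - toR2 u)) := by
    have honline := hline (toR2 u) (toR2 v - toR2 u) hw0
    have hsplit : (∑ a ∈ A.support, A a)
        = lineMult A (toR2 u) (toR2 v - toR2 u)
          + ∑ a ∈ A.support, (if ¬ (∃ r : ℝ, toR2 a = toR2 u + r • (toR2 v - toR2 u))
              then A a else 0) := by
      rw [lineMult, ← Finset.sum_add_distrib]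
      apply Finset.sum_congr rfl
      intro a _
      by_cases h : ∃ r : ℝ, toR2 a = toR2 u + r • (toR2 v - toR2 u)
      · simp [h]
      · simp [h]
    have hpos : 0 < ∑ a ∈ A.support, (if ¬ (∃ r : ℝ, toR2 a = toR2 u + r • (toR2 v - toR2 u))
        then A a else 0) := by
      rw [hlen] at hsplit
      norm_num at hsplit ⊢
      linarith
    obtain ⟨p, hp, hpne⟩ := Finset.exists_ne_zero_of_sum_ne_zero (ne_of_gt hpos)
    refine ⟨p, hp, ?_, ?_⟩
    · exact Finsupp.mem_support_iff.mp hp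
    · intro h
      rw [if_neg (not_not_intro h)] at hpne
      exact hpne rfl
  obtain ⟨p, hpsupp, hAp, hpoff⟩ := hoffsum
  have hAp' : 0 < A p := lt_of_le_of_ne (hnonneg p) (Ne.symm hAp)
  have huon : ∃ r : ℝ, toR2 u = toR2 u + r • (toR2 v - toR2 u) := ⟨0, by simp⟩
  have hvon : ∃ r : ℝ, toR2 v = toR2 u + r • (toR2 v - toR2 u) := ⟨1, by module⟩
  have hveq : toR2 v = toR2 m + toR2 m - toR2 u := by rw [← htoRmid]; abel
  have hueq : toR2 u = toR2 m + toR2 m - toR2 v := by rw [← htoRmid]; abel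
  have hmon : ∃ r : ℝ, toR2 m = toR2 u + r • (toR2 v - toR2 u) := by
    refine ⟨1/2, ?_⟩
    rw [hveq]
    module
  have hup : u ≠ p := by rintro rfl; exact hpoff huon
  have hvp : v ≠ p := by rintro rfl; exact hpoff hvon
  have hmp : m ≠ p := by rintro rfl; exact hpoff hmon
  have hmu : m ≠ u := by
    intro h
    rw [h] at hmid
    exact huv (add_left_cancel hmid).symm
  have hmv : m ≠ v := by
    intro h
    rw [h] at hmid
    have hmid' : v + u = v + v := by
      rw [← hmid]; abel
    exact huv (add_left_cancel hmid')
  have hseg : toR2 m ∈ segment ℝ (toR2 u) (toR2 v) := by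
    refine ⟨1/2, 1/2, by norm_num, by norm_num, by norm_num, ?_⟩
    rw [hveq]
    module
  have hhull : toR2 m ∈ convexHull ℝ {toR2 u, toR2 v, toR2 p} := by
    apply segment_subset_convexHull (Set.mem_insert _ _)
      (Set.mem_insert_of_mem _ (Set.mem_insert _ _))
    exact hseg
  rcases hrepl u v p m huv hup hvp hmu hmv hmp hAu' hAv' hAp' hhull with hhalf | hLex
  · exact hm hhalf
  obtain ⟨q, wd, hwdne, ⟨rm, hrm⟩, hmult, hside⟩ := hLex
  have hnotboth := hside u v (Set.mem_insert _ _)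
    (Set.mem_insert_of_mem _ (Set.mem_insert _ _)) huv hseg
  have himp1 : (∃ r : ℝ, toR2 u = q + r • wd) → (∃ r : ℝ, toR2 v = q + r • wd) := by
    rintro ⟨ru, hru⟩
    refine ⟨2*rm - ru, ?_⟩
    rw [hveq, hrm, hru]
    module
  have himp2 : (∃ r : ℝ, toR2 v = q + r • wd) → (∃ r : ℝ, toR2 u = q + r • wd) := by
    rintro ⟨rv, hrv⟩
    refine ⟨2*rm - rv, ?_⟩
    rw [hueq, hrm, hrv]
    module
  have huL : ¬ ∃ r : ℝ, toR2 u = q + r • wd := fun h => hnotboth ⟨h, himp1 h⟩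
  have hvL : ¬ ∃ r : ℝ, toR2 v = q + r • wd := fun h => hnotboth ⟨himp2 h, h⟩
  -- the support on the line
  set SL := A.support.filter (fun a => ∃ r : ℝ, toR2 a = q + r • wd) with hSL
  have hSLsum : ∑ a ∈ SL, A a = 3/2 := by
    rw [hSL, Finset.sum_filter]
    exact hmult
  have hSLmem : ∀ a ∈ SL, (∃ r : ℝ, toR2 a = q + r • wd) :=
    fun a ha => (Finset.mem_filter.mp ha).2
  have hSLsupp : ∀ a ∈ SL, a ∈ A.support := fun a ha => (Finset.mem_filter.mp ha).1
  have hcard : ∃ a1 ∈ SL, ∃ a2 ∈ SL, a1 ≠ a2 := by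
    by_contra hc
    push_neg at hc
    have hle : ∑ a ∈ SL, A a ≤ 1/2 := by
      rcases Finset.eq_empty_or_nonempty SL with he | ⟨a, ha⟩
      · rw [he, Finset.sum_empty]; norm_num
      · have : SL = {a} := Finset.eq_singleton_iff_unique_mem.mpr
          ⟨ha, fun b hb => hc b hb a ha⟩
        rw [this, Finset.sum_singleton]
        exact hmax a
    rw [hSLsum] at hle
    norm_num at hle
  obtain ⟨a1, ha1, a2, ha2, ha12⟩ := hcard
  obtain ⟨r1, hr1⟩ := hSLmem a1 ha1
  obtain ⟨r2, hr2⟩ := hSLmem a2 ha2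
  have hr12 : r1 ≠ r2 := by
    intro h
    apply ha12
    apply toR2_injective
    rw [hr1, hr2, h]
  have he0 : a2 - a1 ≠ 0 := sub_ne_zero.mpr (Ne.symm ha12)
  obtain ⟨d, g, hgpos, hedg, hdprim⟩ := exists_primitive (a2 - a1) he0
  obtain ⟨c1, c2, hbez⟩ := prim_bezout d hdprim
  have htoRe : toR2 a2 - toR2 a1 = (g:ℝ) • toR2 d := by
    have h1 : a2.1 - a1.1 = g * d.1 := by
      have := congrArg Prod.fst hedg
      simpa using this
    have h2 : a2.2 - a1.2 = g * d.2 := by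
      have := congrArg Prod.snd hedg
      simpa using this
    apply Prod.ext
    · show (a2.1 : ℝ) - (a1.1 : ℝ) = (g : ℝ) * (d.1 : ℝ)
      exact_mod_cast congrArg (Int.cast : ℤ → ℝ) h1
    · show (a2.2 : ℝ) - (a1.2 : ℝ) = (g : ℝ) * (d.2 : ℝ)
      exact_mod_cast congrArg (Int.cast : ℤ → ℝ) h2
  have hwdrel : (r2 - r1) • wd = (g:ℝ) • toR2 d := by
    rw [← htoRe, hr1, hr2]
    module
  have hr12' : r2 - r1 ≠ 0 := sub_ne_zero.mpr (Ne.symm hr12)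
  have hgR : (g:ℝ) ≠ 0 := by
    have : (0:ℝ) < (g:ℝ) := by exact_mod_cast hgpos
    linarith
  set ξ : ℤ × ℤ → ℤ := fun z => c1 * (z.1 - m.1) + c2 * (z.2 - m.2) with hξ
  have hparam : ∀ z : ℤ × ℤ, (∃ r : ℝ, toR2 z = q + r • wd) →
      (z.1 = m.1 + ξ z * d.1 ∧ z.2 = m.2 + ξ z * d.2) := by
    rintro z ⟨r, hr⟩
    have h1 : toR2 z - toR2 m = (r - rm) • wd := by
      rw [hr, hrm]; module
    have h2 : (r2 - r1) • (toR2 z - toR2 m) = ((r - rm) * (g:ℝ)) • toR2 d := by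
      calc (r2 - r1) • (toR2 z - toR2 m) = (r - rm) • ((r2 - r1) • wd) := by
            rw [h1, smul_smul, smul_smul, mul_comm]
      _ = ((r - rm) * (g:ℝ)) • toR2 d := by rw [hwdrel, smul_smul]
    set τ : ℝ := (r - rm) * (g:ℝ) / (r2 - r1) with hτ
    have hc1 : ((z.1 : ℝ) - (m.1 : ℝ)) = τ * (d.1 : ℝ) := by
      have hcomp := congrArg Prod.fst h2
      simp only [Prod.smul_fst, Prod.fst_sub, toR2, smul_eq_mul] at hcomp
      rw [hτ]
      field_simp
      linear_combination hcomp
    have hc2 : ((z.2 : ℝ) - (m.2 : ℝ)) = τ * (d.2 : ℝ) := by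
      have hcomp := congrArg Prod.snd h2
      simp only [Prod.smul_snd, Prod.snd_sub, toR2, smul_eq_mul] at hcomp
      rw [hτ]
      field_simp
      linear_combination hcomp
    have hτval : (ξ z : ℝ) = τ := by
      rw [hξ]
      push_cast
      rw [hc1, hc2]
      have hbezR : (c1:ℝ) * ((d.1:ℝ)) + (c2:ℝ) * ((d.2:ℝ)) = 1 := by exact_mod_cast hbez
      linear_combination τ * hbezR
    constructor
    · have : (z.1 : ℝ) = (m.1 : ℝ) + (ξ z : ℝ) * (d.1 : ℝ) := by
        rw [hτval]; linarith [hc1]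
      exact_mod_cast this
    · have : (z.2 : ℝ) = (m.2 : ℝ) + (ξ z : ℝ) * (d.2 : ℝ) := by
        rw [hτval]; linarith [hc2]
      exact_mod_cast this
  have hconv : ∀ z : ℤ × ℤ, (z.1 = m.1 + ξ z * d.1 ∧ z.2 = m.2 + ξ z * d.2) →
      (∃ r : ℝ, toR2 z = q + r • wd) := by
    rintro z ⟨h1, h2⟩
    refine ⟨rm + (ξ z : ℝ) * (r2 - r1) / (g:ℝ), ?_⟩
    have htoRz : toR2 z = toR2 m + (ξ z : ℝ) • toR2 d := by
      simp only [toR2, Prod.ext_iff, Prod.fst_add, Prod.snd_add, Prod.smul_fst, Prod.smul_snd,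
        smul_eq_mul]
      constructor <;> [exact_mod_cast congrArg (Int.cast : ℤ → ℝ) h1;
        exact_mod_cast congrArg (Int.cast : ℤ → ℝ) h2]
    have htd : toR2 d = ((r2 - r1) / (g:ℝ)) • wd := by
      have h := hwdrel.symm
      have h2 := congrArg (fun x => (g:ℝ)⁻¹ • x) h
      simp only [smul_smul, inv_mul_cancel₀ hgR, one_smul] at h2
      rw [h2, div_eq_inv_mul]
    rw [htoRz, hrm, htd, smul_smul]
    module
  have huSL : u ∉ SL := fun h => huL (hSLmem u h)
  have hvSL : v ∉ SL := fun h => hvL (hSLmem v h)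
  -- determinant nonzero
  have hdetZ : zdet d (u - v) ≠ 0 := by
    intro h0
    obtain ⟨t, ht⟩ := zdet_zero_dvd d (u - v) hdprim h0
    have ht1 : u.1 - v.1 = t * d.1 := by
      have := congrArg Prod.fst ht; simpa using this
    have ht2 : u.2 - v.2 = t * d.2 := by
      have := congrArg Prod.snd ht; simpa using this
    rcases Int.even_or_odd t with ⟨t', ht'⟩ | ⟨t', ht'⟩
    · apply huL
      apply hconv
      have hu1 : u.1 - m.1 = t' * d.1 := by
        have h2 : 2 * (u.1 - m.1) = 2 * (t' * d.1) := by
          have : u.1 - v.1 = 2 * (u.1 - m.1) := by omega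
          rw [this] at ht1
          rw [ht1, ht']
          ring
        exact mul_left_cancel₀ two_ne_zero h2
      have hu2 : u.2 - m.2 = t' * d.2 := by
        have h2 : 2 * (u.2 - m.2) = 2 * (t' * d.2) := by
          have : u.2 - v.2 = 2 * (u.2 - m.2) := by omega
          rw [this] at ht2
          rw [ht2, ht']
          ring
        exact mul_left_cancel₀ two_ne_zero h2
      have hξu : ξ u = t' := by
        rw [hξ]
        simp only []
        linear_combination c1 * hu1 + c2 * hu2 + t' * hbez
      constructor
      · rw [hξu]; omega
      · rw [hξu]; omega
    · exfalso
      have hodd : Odd t := ⟨t', ht'⟩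
      have he1 : Even (t * d.1) := by
        rw [← ht1]
        exact ⟨u.1 - m.1, by omega⟩
      have he2 : Even (t * d.2) := by
        rw [← ht2]
        exact ⟨u.2 - m.2, by omega⟩
      have hne : ¬ Even t := by
        rw [← Int.not_odd_iff_even]
        exact not_not_intro hodd
      have hd1 : (2:ℤ) ∣ d.1 := by
        rcases Int.even_mul.mp he1 with h | h
        · exact absurd h hne
        · exact h.two_dvd
      have hd2 : (2:ℤ) ∣ d.2 := by
        rcases Int.even_mul.mp he2 with h | h
        · exact absurd h hne
        · exact h.two_dvd
      have h2g : (2:ℤ) ∣ (Int.gcd d.1 d.2 : ℤ) := Int.dvd_coe_gcd hd1 hd2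
      rw [hdprim] at h2g
      norm_num at h2g
  have hdetR : (toR2 d).1 * (toR2 u - toR2 v).2 - (toR2 d).2 * (toR2 u - toR2 v).1 ≠ 0 := by
    intro h
    apply hdetZ
    have hcast : ((zdet d (u - v) : ℤ) : ℝ)
        = (toR2 d).1 * (toR2 u - toR2 v).2 - (toR2 d).2 * (toR2 u - toR2 v).1 := by
      simp only [zdet, toR2, Prod.fst_sub, Prod.snd_sub]
      push_cast
      ring
    rw [h] at hcast
    exact_mod_cast hcast
  -- injectivity of ξ on SL
  have hinjξ : Set.InjOn ξ SL := by
    intro a ha b hb hab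
    have h1 := hparam a (hSLmem a ha)
    have h2 := hparam b (hSLmem b hb)
    apply Prod.ext
    · rw [h1.1, h2.1, hab]
    · rw [h1.2, h2.2, hab]
  -- core
  have hεpos : (0:ℝ) < min (A u) (A v) / 2 := div_pos (lt_min hAu' hAv') two_pos
  obtain ⟨x, α, sB, sT, hα0, hαε, hsBout, hsTout, hsBbd, hsTbd, hsBsum, hsTsum, hBlt, hTgt⟩ :=
    core SL ξ hinjξ (fun a => A a) (fun i _ => hnonneg i) (fun i _ => hmax i) hSLsum hεpos
  have hαu : α + α/2 ≤ A u := by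
    have h1 : min (A u) (A v) ≤ A u := min_le_left _ _
    linarith
  have hαv : α + α/2 ≤ A v := by
    have h1 : min (A u) (A v) ≤ A v := min_le_right _ _
    linarith
  -- mixed selection
  set Bv := ∑ i ∈ SL, sB i * (ξ i : ℝ) with hBv
  set Tv := ∑ i ∈ SL, sT i * (ξ i : ℝ) with hTv
  have hBT : Bv < Tv := lt_trans hBlt hTgt
  have hTBpos : 0 < Tv - Bv := by linarith
  set lam := (Tv - (x:ℝ)) / (Tv - Bv) with hlam
  have hlam0 : 0 ≤ lam := div_nonneg (by linarith) (by linarith)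
  have hlam1 : lam ≤ 1 := by
    rw [hlam, div_le_one hTBpos]
    linarith
  set sM : ℤ × ℤ → ℝ := fun i => lam * sB i + (1 - lam) * sT i with hsM
  have hsMout : ∀ i, i ∉ SL → sM i = 0 := by
    intro i hi
    rw [hsM]
    simp only []
    rw [hsBout i hi, hsTout i hi]
    ring
  have hsMbd : ∀ i ∈ SL, 0 ≤ sM i ∧ sM i ≤ A i := by
    intro i hi
    obtain ⟨h1, h2⟩ := hsBbd i hi
    obtain ⟨h3, h4⟩ := hsTbd i hi
    have hm1 : 0 ≤ lam * sB i := mul_nonneg hlam0 h1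
    have hm2 : 0 ≤ (1 - lam) * sT i := mul_nonneg (by linarith) h3
    constructor
    · rw [hsM]; simp only []; linarith
    · rw [hsM]; simp only []
      have hb1 : lam * sB i ≤ lam * A i := mul_le_mul_of_nonneg_left h2 hlam0
      have hb2 : (1 - lam) * sT i ≤ (1 - lam) * A i :=
        mul_le_mul_of_nonneg_left h4 (by linarith)
      nlinarith
  have hsMsum : ∑ i ∈ SL, sM i = 1 - 2*α := by
    have : ∑ i ∈ SL, sM i = lam * (∑ i ∈ SL, sB i) + (1 - lam) * (∑ i ∈ SL, sT i) := by
      rw [Finset.mul_sum, Finset.mul_sum, ← Finset.sum_add_distrib]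
    rw [this, hsBsum, hsTsum]
    ring
  have hsMmom : ∑ i ∈ SL, sM i * (ξ i : ℝ) = (x : ℝ) := by
    have h : ∑ i ∈ SL, sM i * (ξ i : ℝ) = lam * Bv + (1 - lam) * Tv := by
      rw [hBv, hTv, Finset.mul_sum, Finset.mul_sum, ← Finset.sum_add_distrib]
      apply Finset.sum_congr rfl
      intro i _
      rw [hsM]
      ring
    rw [h, hlam]
    field_simp
    ring
  -- barycenter formula
  have htoR_SL : ∀ i ∈ SL, toR2 i = toR2 m + (ξ i : ℝ) • toR2 d := by
    intro i hi
    have h := hparam i (hSLmem i hi)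
    exact toR2_lin i m d (ξ i) h.1 h.2
  have hbary : ∀ s : ℤ × ℤ → ℝ, ∑ i ∈ SL, s i • toR2 i
      = (∑ i ∈ SL, s i) • toR2 m + (∑ i ∈ SL, s i * (ξ i : ℝ)) • toR2 d := by
    intro s
    have hterm : ∀ i ∈ SL, s i • toR2 i = s i • toR2 m + (s i * (ξ i:ℝ)) • toR2 d := by
      intro i hi
      rw [htoR_SL i hi, smul_add, smul_smul]
    rw [Finset.sum_congr rfl hterm, Finset.sum_add_distrib, ← Finset.sum_smul, ← Finset.sum_smul]
  have husupp : u ∈ A.support := Finsupp.mem_support_iff.mpr hAu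
  have hvsupp : v ∈ A.support := Finsupp.mem_support_iff.mpr hAv
  have hSLsub : SL ⊆ A.support := Finset.filter_subset _ _
  -- generic membership
  have hmem : ∀ (au av : ℝ) (s : ℤ × ℤ → ℝ),
      0 ≤ au → au ≤ A u → 0 ≤ av → av ≤ A v →
      (∀ i, i ∉ SL → s i = 0) → (∀ i ∈ SL, 0 ≤ s i ∧ s i ≤ A i) →
      ((∑ i ∈ SL, s i) • toR2 m + (∑ i ∈ SL, s i * (ξ i : ℝ)) • toR2 d
        + au • toR2 u + av • toR2 v) ∈ sigmaR 1 A ∨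
      ¬ ((∑ i ∈ SL, s i) + au + av = 1) := by
    intro au av s hau0 hau1 hav0 hav1 hsout hsbd
    by_cases hsum1 : (∑ i ∈ SL, s i) + au + av = 1
    swap
    · exact Or.inr hsum1
    left
    refine ⟨fun i => s i + (if i = u then au else 0) + (if i = v then av else 0), ?_, ?_, ?_⟩
    · intro i
      simp only []
      by_cases hiSL : i ∈ SL
      · have hiu : i ≠ u := fun h => huSL (h ▸ hiSL)
        have hiv : i ≠ v := fun h => hvSL (h ▸ hiSL)
        rw [if_neg hiu, if_neg hiv]
        obtain ⟨h1, h2⟩ := hsbd i hiSL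
        constructor <;> [linarith; linarith]
      · rw [hsout i hiSL]
        by_cases hiu : i = u
        · rw [if_pos hiu, if_neg (by rw [hiu]; exact huv)]
          subst hiu
          constructor <;> [linarith; linarith]
        · rw [if_neg hiu]
          by_cases hiv : i = v
          · rw [if_pos hiv]
            subst hiv
            constructor <;> [linarith; linarith]
          · rw [if_neg hiv]
            constructor <;> [linarith; linarith [hnonneg i]]
    · rw [Finset.sum_add_distrib, Finset.sum_add_distrib]
      have h1 : ∑ i ∈ A.support, s i = ∑ i ∈ SL, s i := by
        symm
        apply Finset.sum_subset hSLsub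
        intro i _ hi
        exact hsout i hi
      have h2 : ∑ i ∈ A.support, (if i = u then au else 0) = au := by
        rw [Finset.sum_ite_eq' A.support u (fun _ => au), if_pos husupp]
      have h3 : ∑ i ∈ A.support, (if i = v then av else 0) = av := by
        rw [Finset.sum_ite_eq' A.support v (fun _ => av), if_pos hvsupp]
      rw [h1, h2, h3]
      exact hsum1
    · have hsplit : ∀ i ∈ A.support,
          (s i + (if i = u then au else 0) + (if i = v then av else 0)) • toR2 i
          = s i • toR2 i + (if i = u then au • toR2 u else 0)
            + (if i = v then av • toR2 v else 0) := by
        intro i _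
        by_cases hiu : i = u
        · subst hiu
          rw [if_neg huv, if_neg huv, if_pos rfl, if_pos rfl]
          rw [add_smul, add_smul]
          simp
        · by_cases hiv : i = v
          · subst hiv
            rw [if_neg hiu, if_neg hiu, if_pos rfl, if_pos rfl]
            rw [add_smul, add_smul]
            simp
          · rw [if_neg hiu, if_neg hiu, if_neg hiv, if_neg hiv]
            rw [add_smul, add_smul]
            simp
      rw [Finset.sum_congr rfl hsplit, Finset.sum_add_distrib, Finset.sum_add_distrib]
      have h1 : ∑ i ∈ A.support, s i • toR2 i = ∑ i ∈ SL, s i • toR2 i := by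
        symm
        apply Finset.sum_subset hSLsub
        intro i _ hi
        rw [hsout i hi, zero_smul]
      have h2 : ∑ i ∈ A.support, (if i = u then au • toR2 u else 0) = au • toR2 u := by
        rw [Finset.sum_ite_eq' A.support u (fun _ => au • toR2 u), if_pos husupp]
      have h3 : ∑ i ∈ A.support, (if i = v then av • toR2 v else 0) = av • toR2 v := by
        rw [Finset.sum_ite_eq' A.support v (fun _ => av • toR2 v), if_pos hvsupp]
      rw [h1, h2, h3, hbary s]
  -- the four points
  have hsum1 : (∑ i ∈ SL, sB i) + α + α = 1 := by rw [hsBsum]; ring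
  have hsum2 : (∑ i ∈ SL, sT i) + α + α = 1 := by rw [hsTsum]; ring
  have hsum3 : (∑ i ∈ SL, sM i) + (α + α/2) + (α - α/2) = 1 := by rw [hsMsum]; ring
  have hsum4 : (∑ i ∈ SL, sM i) + (α - α/2) + (α + α/2) = 1 := by rw [hsMsum]; ring
  have hP1 := (hmem α α sB (le_of_lt hα0) (by linarith) (le_of_lt hα0) (by linarith)
    hsBout (fun i hi => hsBbd i hi)).resolve_right (not_not_intro hsum1)
  have hP2 := (hmem α α sT (le_of_lt hα0) (by linarith) (le_of_lt hα0) (by linarith)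
    hsTout (fun i hi => hsTbd i hi)).resolve_right (not_not_intro hsum2)
  have hP3 := (hmem (α + α/2) (α - α/2) sM (by linarith) (by linarith) (by linarith)
    (by linarith) hsMout hsMbd).resolve_right (not_not_intro hsum3)
  have hP4 := (hmem (α - α/2) (α + α/2) sM (by linarith) (by linarith) (by linarith)
    (by linarith) hsMout hsMbd).resolve_right (not_not_intro hsum4)
  set G : ℝ × ℝ := toR2 m + (x:ℝ) • toR2 d with hG
  have hV1 : (∑ i ∈ SL, sB i) • toR2 m + Bv • toR2 d + α • toR2 u + α • toR2 v
      = G - ((x:ℝ) - Bv) • toR2 d := by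
    rw [hsBsum, hveq, hG]
    module
  have hV2 : (∑ i ∈ SL, sT i) • toR2 m + Tv • toR2 d + α • toR2 u + α • toR2 v
      = G + (Tv - (x:ℝ)) • toR2 d := by
    rw [hsTsum, hveq, hG]
    module
  have hV3 : (∑ i ∈ SL, sM i) • toR2 m + (∑ i ∈ SL, sM i * (ξ i : ℝ)) • toR2 d
      + (α + α/2) • toR2 u + (α - α/2) • toR2 v
      = G + (α/2) • (toR2 u - toR2 v) := by
    rw [hsMsum, hsMmom, hveq, hG]
    module
  have hV4 : (∑ i ∈ SL, sM i) • toR2 m + (∑ i ∈ SL, sM i * (ξ i : ℝ)) • toR2 d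
      + (α - α/2) • toR2 u + (α + α/2) • toR2 v
      = G - (α/2) • (toR2 u - toR2 v) := by
    rw [hsMsum, hsMmom, hveq, hG]
    module
  rw [← hBv] at hP1
  rw [← hTv] at hP2
  rw [hV1] at hP1
  rw [hV2] at hP2
  rw [hV3] at hP3
  rw [hV4] at hP4
  have hint : G ∈ interior (sigmaR 1 A) := by
    apply diamond (convex_sigmaR A) G (toR2 d) (toR2 u - toR2 v) hdetR
      (by linarith : (0:ℝ) < (x:ℝ) - Bv) (by linarith : (0:ℝ) < Tv - (x:ℝ))
      (by linarith : (0:ℝ) < α/2) hP1 hP2 hP3 hP4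
  apply hnoint
  refine ⟨(m.1 + x * d.1, m.2 + x * d.2), ?_⟩
  have hGe : toR2 ((m.1 + x * d.1, m.2 + x * d.2) : ℤ × ℤ) = G := by
    rw [hG]
    exact toR2_lin _ m d x rfl rfl
  rw [hGe]
  exact hint


def cls (a : ℤ × ℤ) : ZMod 2 × ZMod 2 := ((a.1 : ZMod 2), (a.2 : ZMod 2))

lemma mid_of_cls (a b : ℤ × ℤ) (h : cls a = cls b) : ∃ m2 : ℤ × ℤ, a + b = m2 + m2 := by
  have h1 : (a.1 : ZMod 2) = (b.1 : ZMod 2) := congrArg Prod.fst h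
  have h2 : (a.2 : ZMod 2) = (b.2 : ZMod 2) := congrArg Prod.snd h
  have hd1 : (2:ℤ) ∣ (a.1 - b.1) := by
    have := (ZMod.intCast_eq_intCast_iff' a.1 b.1 2).mp h1
    exact Int.ModEq.dvd (by exact this.symm)
  have hd2 : (2:ℤ) ∣ (a.2 - b.2) := by
    have := (ZMod.intCast_eq_intCast_iff' a.2 b.2 2).mp h2
    exact Int.ModEq.dvd (by exact this.symm)
  refine ⟨((a.1 + b.1)/2, (a.2 + b.2)/2), ?_⟩
  apply Prod.ext
  · show a.1 + b.1 = (a.1 + b.1)/2 + (a.1 + b.1)/2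
    omega
  · show a.2 + b.2 = (a.2 + b.2)/2 + (a.2 + b.2)/2
    omega

lemma fiber_card : ∀ (d1 d2 k1 k2 t : ZMod 2), ¬(d1 = 0 ∧ d2 = 0) →
    ((Finset.univ : Finset (ZMod 2 × ZMod 2)).filter
      (fun c => d1 * (c.2 - k2) - d2 * (c.1 - k1) = t)).card ≤ 2 := by
  decide

set_option maxHeartbeats 2000000 in
theorem stmt7_main (A : (ℤ × ℤ) →₀ ℝ)
    (hnonneg : ∀ a, 0 ≤ A a)
    (hlen : (∑ a ∈ A.support, A a) = 3.99)
    (hmax : ∀ a, A a ≤ 1 / 2)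
    (hline : ∀ q w : ℝ × ℝ, w ≠ 0 → lineMult A q w ≤ 3 / 2)
    (hrepl : ReplacementClosed A)
    (hnoint : ¬ ∃ x : ℤ × ℤ, toR2 x ∈ interior (sigmaR 1 A)) :
    ∃ a b c : ℤ × ℤ, A a = 1 / 2 ∧ A b = 1 / 2 ∧ A c = 1 / 2 ∧
      ¬ Collinear ℝ ({toR2 a, toR2 b, toR2 c} : Set (ℝ × ℝ)) := by
  by_contra hcon
  push_neg at hcon
  have gt := gtmt A hnonneg hlen hmax hline hrepl hnoint
  -- support has at least 8 elements
  have hcard : 8 ≤ A.support.card := by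
    by_contra hc
    push_neg at hc
    have hb : ∑ a ∈ A.support, A a ≤ A.support.card • (1/2 : ℝ) :=
      Finset.sum_le_card_nsmul _ _ _ (fun x _ => hmax x)
    rw [hlen] at hb
    rw [nsmul_eq_mul] at hb
    have : (A.support.card : ℝ) ≤ 7 := by exact_mod_cast Nat.le_of_lt_succ hc
    norm_num at hb
    linarith
  -- a congruent pair exists
  have hpigeon : ∃ a ∈ A.support, ∃ b ∈ A.support, a ≠ b ∧ cls a = cls b := by
    have hlt : (Finset.univ : Finset (ZMod 2 × ZMod 2)).card < A.support.card := by
      have h4 : (Finset.univ : Finset (ZMod 2 × ZMod 2)).card = 4 := by decide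
      rw [h4]
      exact lt_of_lt_of_le (by norm_num) hcard
    obtain ⟨a, ha, b, hb, hab, heq⟩ :=
      Finset.exists_ne_map_eq_of_card_lt_of_maps_to hlt
        (fun a _ => Finset.mem_univ (cls a))
    exact ⟨a, ha, b, hb, hab, heq⟩
  -- H has two distinct elements
  have hHtwo : ∃ h1 h2 : ℤ × ℤ, A h1 = 1/2 ∧ A h2 = 1/2 ∧ h1 ≠ h2 := by
    by_contra hH
    push_neg at hH
    obtain ⟨a, ha, b, hb, hab, hclseq⟩ := hpigeon
    obtain ⟨p, hp⟩ := mid_of_cls a b hclseq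
    have hAp : A p = 1/2 := gt a b p (Finsupp.mem_support_iff.mp ha)
      (Finsupp.mem_support_iff.mp hb) hab hp
    -- all of H equals p ; all fibers small
    have hfib : ∀ z : ZMod 2 × ZMod 2,
        (A.support.filter (fun c => cls c = z)).card ≤ if z = cls p then 1 else 2 := by
      intro z
      split
      · rename_i hz
        subst hz
        -- fiber of cls p is {p} at most
        apply Finset.card_le_one.mpr ?_ |>.trans (le_refl 1)
        intro c1 hc1 c2 hc2
        have hk : ∀ c ∈ A.support.filter (fun c => cls c = cls p), c = p := by
          intro c hc
          obtain ⟨hcs, hcc⟩ := Finset.mem_filter.mp hc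
          by_contra hne
          obtain ⟨m2, hm2⟩ := mid_of_cls c p hcc
          have : A m2 = 1/2 := gt c p m2 (Finsupp.mem_support_iff.mp hcs)
            (by rw [hAp]; norm_num) hne hm2
          have hm2p : m2 = p := hH m2 p this hAp
          rw [hm2p] at hm2
          have e1 := congrArg Prod.fst hm2
          have e2 := congrArg Prod.snd hm2
          simp only [Prod.fst_add, Prod.snd_add] at e1 e2
          exact hne (Prod.ext (by omega) (by omega))
        rw [hk c1 hc1, hk c2 hc2]
      · -- other fibers: at most 2
        by_contra hgt
        push_neg at hgt
        obtain ⟨c1, c2, c3, hc1, hc2, hc3, h12, h13, h23⟩ :=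
          Finset.two_lt_card_iff.mp hgt
        obtain ⟨hc1s, hc1z⟩ := Finset.mem_filter.mp hc1
        obtain ⟨hc2s, hc2z⟩ := Finset.mem_filter.mp hc2
        obtain ⟨hc3s, hc3z⟩ := Finset.mem_filter.mp hc3
        obtain ⟨m12, hm12⟩ := mid_of_cls c1 c2 (hc1z.trans hc2z.symm)
        obtain ⟨m13, hm13⟩ := mid_of_cls c1 c3 (hc1z.trans hc3z.symm)
        have hA12 : A m12 = 1/2 := gt c1 c2 m12 (Finsupp.mem_support_iff.mp hc1s)
          (Finsupp.mem_support_iff.mp hc2s) h12 hm12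
        have hA13 : A m13 = 1/2 := gt c1 c3 m13 (Finsupp.mem_support_iff.mp hc1s)
          (Finsupp.mem_support_iff.mp hc3s) h13 hm13
        have e12 : m12 = p := hH m12 p hA12 hAp
        have e13 : m13 = p := hH m13 p hA13 hAp
        rw [e12] at hm12
        rw [e13] at hm13
        apply h23
        have e1 := congrArg Prod.fst hm12
        have e2 := congrArg Prod.snd hm12
        have e3 := congrArg Prod.fst hm13
        have e4 := congrArg Prod.snd hm13
        simp only [Prod.fst_add, Prod.snd_add] at e1 e2 e3 e4
        apply Prod.ext <;> omega
    -- sum the fibers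
    have hsumfib : A.support.card = ∑ z ∈ (Finset.univ : Finset (ZMod 2 × ZMod 2)),
        (A.support.filter (fun c => cls c = z)).card :=
      Finset.card_eq_sum_card_fiberwise (fun c _ => Finset.mem_univ (cls c))
    have hbound : ∑ z ∈ (Finset.univ : Finset (ZMod 2 × ZMod 2)),
        (A.support.filter (fun c => cls c = z)).card
        ≤ ∑ z ∈ (Finset.univ : Finset (ZMod 2 × ZMod 2)),
          (if z = cls p then 1 else 2) := Finset.sum_le_sum (fun z _ => hfib z)
    have hval : ∀ w : ZMod 2 × ZMod 2, (∑ z ∈ (Finset.univ : Finset (ZMod 2 × ZMod 2)),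
        (if z = w then 1 else 2)) = 7 := by decide
    have := hval (cls p)
    omega
  obtain ⟨h1, h2, hH1, hH2, h12⟩ := hHtwo
  have he0 : h2 - h1 ≠ 0 := sub_ne_zero.mpr (Ne.symm h12)
  obtain ⟨d, g, hgpos, hedg, hdprim⟩ := exists_primitive (h2 - h1) he0
  set η : ℤ × ℤ → ℤ := fun z => zdet d (z - h1) with hη
  have hwne : toR2 h2 - toR2 h1 ≠ 0 := by
    intro h
    exact h12 (toR2_injective (sub_eq_zero.mp h)).symm
  have hgR : (g:ℝ) ≠ 0 := by
    have : (0:ℝ) < (g:ℝ) := by exact_mod_cast hgpos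
    linarith
  have he1 : h2.1 - h1.1 = g * d.1 := by
    have := congrArg Prod.fst hedg; simpa using this
  have he2 : h2.2 - h1.2 = g * d.2 := by
    have := congrArg Prod.snd hedg; simpa using this
  have htoRe : toR2 h2 - toR2 h1 = (g:ℝ) • toR2 d := by
    apply Prod.ext
    · show (h2.1 : ℝ) - (h1.1 : ℝ) = (g : ℝ) * (d.1 : ℝ)
      exact_mod_cast congrArg (Int.cast : ℤ → ℝ) he1
    · show (h2.2 : ℝ) - (h1.2 : ℝ) = (g : ℝ) * (d.2 : ℝ)
      exact_mod_cast congrArg (Int.cast : ℤ → ℝ) he2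
  -- real determinant zero implies η zero
  have hdet0_eta : ∀ z : ℤ × ℤ,
      (toR2 h2 - toR2 h1).1 * (toR2 z - toR2 h1).2
        - (toR2 h2 - toR2 h1).2 * (toR2 z - toR2 h1).1 = 0 → η z = 0 := by
    intro z hreal
    have hZ : zdet (h2 - h1) (z - h1) = 0 := by
      have hc : ((zdet (h2 - h1) (z - h1) : ℤ) : ℝ)
          = (toR2 h2 - toR2 h1).1 * (toR2 z - toR2 h1).2
            - (toR2 h2 - toR2 h1).2 * (toR2 z - toR2 h1).1 := by
        simp only [zdet, toR2, Prod.fst_sub, Prod.snd_sub]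
        push_cast
        ring
      rw [hreal] at hc
      exact_mod_cast hc
    have hZ2 : (g * d.1) * (z.2 - h1.2) - (g * d.2) * (z.1 - h1.1) = 0 := by
      rw [← he1, ← he2]
      simpa [zdet, Prod.fst_sub, Prod.snd_sub] using hZ
    have hgz : g * η z = 0 := by
      show g * (d.1 * ((z - h1).2) - d.2 * ((z - h1).1)) = 0
      simp only [Prod.fst_sub, Prod.snd_sub]
      linear_combination hZ2
    rcases mul_eq_zero.mp hgz with h | h
    · exact absurd h (by exact_mod_cast ne_of_gt hgpos)
    · exact h
  -- every half point lies on the line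
  have hHeta : ∀ z : ℤ × ℤ, A z = 1/2 → η z = 0 := by
    intro z hz
    have hcol := hcon h1 h2 z hH1 hH2 hz
    have hmem1 : toR2 h1 ∈ ({toR2 h1, toR2 h2, toR2 z} : Set (ℝ × ℝ)) := Set.mem_insert _ _
    obtain ⟨v, hv⟩ := (collinear_iff_of_mem hmem1).mp hcol
    obtain ⟨r2, hr2⟩ := hv (toR2 h2) (Set.mem_insert_of_mem _ (Set.mem_insert _ _))
    obtain ⟨rz, hrz⟩ := hv (toR2 z)
      (Set.mem_insert_of_mem _ (Set.mem_insert_of_mem _ rfl))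
    apply hdet0_eta
    rw [hr2, hrz]
    simp only [vadd_eq_add, Prod.fst_sub, Prod.snd_sub, Prod.fst_add, Prod.snd_add,
      Prod.smul_fst, Prod.smul_snd, smul_eq_mul]
    ring
  -- odd gap pair
  have hodd : ∀ n : ℕ, ∀ a b : ℤ × ℤ, A a = 1/2 → A b = 1/2 → a ≠ b →
      (b.1 - a.1).natAbs + (b.2 - a.2).natAbs ≤ n →
      ∃ s s' : ℤ × ℤ, A s = 1/2 ∧ A s' = 1/2 ∧ cls s ≠ cls s' := by
    intro n
    induction n using Nat.strong_induction_on with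
    | _ n IH =>
      intro a b ha hb hab hm
      by_cases hcls : cls a = cls b
      · obtain ⟨m2, hm2⟩ := mid_of_cls a b hcls
        have hAm2 : A m2 = 1/2 := gt a b m2 (by rw [ha]; norm_num) (by rw [hb]; norm_num)
          hab hm2
        have e1 := congrArg Prod.fst hm2
        have e2 := congrArg Prod.snd hm2
        simp only [Prod.fst_add, Prod.snd_add] at e1 e2
        have hm2a : m2 ≠ a := by
          intro h
          rw [h] at e1 e2
          exact hab (Prod.ext (by omega) (by omega))
        have hmeas : (m2.1 - a.1).natAbs + (m2.2 - a.2).natAbs < n := by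
          have l1 : (b.1 - a.1).natAbs = 2 * (m2.1 - a.1).natAbs := by
            have hx : b.1 - a.1 = 2 * (m2.1 - a.1) := by omega
            rw [hx, Int.natAbs_mul]
            rfl
          have l2 : (b.2 - a.2).natAbs = 2 * (m2.2 - a.2).natAbs := by
            have hx : b.2 - a.2 = 2 * (m2.2 - a.2) := by omega
            rw [hx, Int.natAbs_mul]
            rfl
          have hne : (m2.1 - a.1).natAbs + (m2.2 - a.2).natAbs ≠ 0 := by
            intro h0
            apply hm2a
            apply Prod.ext <;> omega
          omega
        exact IH _ hmeas a m2 ha hAm2 (Ne.symm hm2a) le_rfl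
      · exact ⟨a, b, ha, hb, hcls⟩
  obtain ⟨s, s', hs, hs', hcls_ss⟩ :=
    hodd ((h2.1 - h1.1).natAbs + (h2.2 - h1.2).natAbs) h1 h2 hH1 hH2 h12 le_rfl
  have hηs : η s = 0 := hHeta s hs
  have hηs' : η s' = 0 := hHeta s' hs'
  -- parity function
  have hcast : ∀ z : ℤ × ℤ, ((η z : ℤ) : ZMod 2)
      = (d.1 : ZMod 2) * ((cls z).2 - (h1.2 : ZMod 2))
        - (d.2 : ZMod 2) * ((cls z).1 - (h1.1 : ZMod 2)) := by
    intro z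
    rw [hη]
    simp only [zdet, cls, Prod.fst_sub, Prod.snd_sub]
    push_cast
    ring
  have hdnz : ¬((d.1 : ZMod 2) = 0 ∧ (d.2 : ZMod 2) = 0) := by
    rintro ⟨hz1, hz2⟩
    have hd1 : (2:ℤ) ∣ d.1 := (ZMod.intCast_zmod_eq_zero_iff_dvd d.1 2).mp hz1
    have hd2 : (2:ℤ) ∣ d.2 := (ZMod.intCast_zmod_eq_zero_iff_dvd d.2 2).mp hz2
    have hzz := Int.dvd_gcd hd1 hd2
    rw [hdprim] at hzz
    norm_num at hzz
  have hmid_eta : ∀ a b m2 : ℤ × ℤ, a + b = m2 + m2 → η a + η b = 2 * η m2 := by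
    intro a b m2 hm
    have e1 := congrArg Prod.fst hm
    have e2 := congrArg Prod.snd hm
    simp only [Prod.fst_add, Prod.snd_add] at e1 e2
    rw [hη]
    simp only [zdet, Prod.fst_sub, Prod.snd_sub]
    linear_combination d.1 * e2 - d.2 * e1
  have hone : ∀ x : ZMod 2, x ≠ 0 → x = 1 := by decide
  -- even values are 0
  have heven : ∀ c : ℤ × ℤ, A c ≠ 0 → ((η c : ℤ) : ZMod 2) = 0 → η c = 0 := by
    intro c hc h0
    by_contra hcnz
    have hmemfib : ∀ y : ℤ × ℤ, ((η y : ℤ) : ZMod 2) = 0 →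
        cls y ∈ Finset.univ.filter (fun cc : ZMod 2 × ZMod 2 =>
          (d.1 : ZMod 2) * (cc.2 - (h1.2 : ZMod 2))
            - (d.2 : ZMod 2) * (cc.1 - (h1.1 : ZMod 2)) = 0) := by
      intro y hy
      rw [Finset.mem_filter]
      exact ⟨Finset.mem_univ _, by rw [← hcast y]; exact hy⟩
    have hcs : cls c = cls s ∨ cls c = cls s' := by
      by_contra hno
      push_neg at hno
      have hsub : ({cls c, cls s, cls s'} : Finset (ZMod 2 × ZMod 2))
          ⊆ Finset.univ.filter (fun cc : ZMod 2 × ZMod 2 =>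
            (d.1 : ZMod 2) * (cc.2 - (h1.2 : ZMod 2))
              - (d.2 : ZMod 2) * (cc.1 - (h1.1 : ZMod 2)) = 0) := by
        intro y hy
        rcases Finset.mem_insert.mp hy with h | hy2
        · rw [h]; exact hmemfib c h0
        rcases Finset.mem_insert.mp hy2 with h | hy3
        · rw [h]; exact hmemfib s (by rw [hηs]; simp)
        · rw [Finset.mem_singleton.mp hy3]; exact hmemfib s' (by rw [hηs']; simp)
      have hc3 : ({cls c, cls s, cls s'} : Finset (ZMod 2 × ZMod 2)).card = 3 := by
        rw [Finset.card_insert_of_notMem, Finset.card_insert_of_notMem,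
          Finset.card_singleton]
        · rw [Finset.mem_singleton]; exact hcls_ss
        · rw [Finset.mem_insert, Finset.mem_singleton]
          push_neg
          exact hno
      have := Finset.card_le_card hsub
      rw [hc3] at this
      have hfc := fiber_card (d.1 : ZMod 2) (d.2 : ZMod 2) (h1.1 : ZMod 2) (h1.2 : ZMod 2)
        0 hdnz
      omega
    have hcontr : ∀ y : ℤ × ℤ, A y = 1/2 → cls c = cls y → False := by
      intro y hy hcy
      have hcyne : c ≠ y := by
        intro he
        rw [he] at hcnz
        exact hcnz (hHeta y hy)
      obtain ⟨m2, hm2⟩ := mid_of_cls c y hcy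
      have hA : A m2 = 1/2 := gt c y m2 hc (by rw [hy]; norm_num) hcyne hm2
      have h0' : η m2 = 0 := hHeta m2 hA
      have hsum := hmid_eta c y m2 hm2
      rw [h0', hHeta y hy] at hsum
      omega
    rcases hcs with h | h
    · exact hcontr s hs h
    · exact hcontr s' hs' h
  -- line sum bounded
  have hbridge : ∀ a : ℤ × ℤ,
      (∃ r : ℝ, toR2 a = toR2 h1 + r • (toR2 h2 - toR2 h1)) ↔ η a = 0 := by
    intro a
    constructor
    · rintro ⟨r, hr⟩
      apply hdet0_eta
      rw [hr]
      simp only [Prod.fst_sub, Prod.snd_sub, Prod.fst_add, Prod.snd_add, Prod.smul_fst,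
        Prod.smul_snd, smul_eq_mul]
      ring
    · intro h0
      obtain ⟨t, ht⟩ := zdet_zero_dvd d (a - h1) hdprim (by rw [hη] at h0; exact h0)
      have ht1 : a.1 = h1.1 + t * d.1 := by
        have := congrArg Prod.fst ht; simp only [Prod.fst_sub] at this; omega
      have ht2 : a.2 = h1.2 + t * d.2 := by
        have := congrArg Prod.snd ht; simp only [Prod.snd_sub] at this; omega
      refine ⟨(t : ℝ) / (g : ℝ), ?_⟩
      rw [toR2_lin a h1 d t ht1 ht2, htoRe, smul_smul, div_mul_cancel₀ _ hgR]
  have honsum : ∑ a ∈ A.support.filter (fun a => η a = 0), A a ≤ 3/2 := by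
    have hLM := hline (toR2 h1) (toR2 h2 - toR2 h1) hwne
    rw [lineMult, ← Finset.sum_filter] at hLM
    have hfeq : A.support.filter
        (fun a => ∃ r : ℝ, toR2 a = toR2 h1 + r • (toR2 h2 - toR2 h1))
        = A.support.filter (fun a => η a = 0) := by
      apply Finset.filter_congr
      intro a _
      exact hbridge a
    rw [hfeq] at hLM
    exact hLM
  -- off-line support is small
  have hoffcard : (A.support.filter (fun a => ¬ η a = 0)).card ≤ 4 := by
    set OFF := A.support.filter (fun a => ¬ η a = 0) with hOFF
    set φ : ℤ × ℤ → Bool × (ZMod 2 × ZMod 2) := fun c => (decide (0 < η c), cls c) with hφ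
    have hinjφ : Set.InjOn φ OFF := by
      intro c hc c' hc' heq
      by_contra hne
      obtain ⟨hcs, hcnz⟩ := Finset.mem_filter.mp hc
      obtain ⟨hcs', hcnz'⟩ := Finset.mem_filter.mp hc'
      have hclseq : cls c = cls c' := congrArg Prod.snd heq
      have hsign : decide (0 < η c) = decide (0 < η c') := congrArg Prod.fst heq
      have hiff : (0 < η c) ↔ (0 < η c') := by
        constructor
        · intro h
          by_contra h'
          rw [decide_eq_true h] at hsign
          rw [eq_comm, decide_eq_true_iff] at hsign
          exact h' hsign
        · intro h
          by_contra h'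
          rw [decide_eq_true h] at hsign
          rw [decide_eq_true_iff] at hsign
          exact h' hsign
      obtain ⟨m2, hm2⟩ := mid_of_cls c c' hclseq
      have hA : A m2 = 1/2 := gt c c' m2 (Finsupp.mem_support_iff.mp hcs)
        (Finsupp.mem_support_iff.mp hcs') hne hm2
      have h0 : η m2 = 0 := hHeta m2 hA
      have hsum := hmid_eta c c' m2 hm2
      rw [h0] at hsum
      by_cases hpos : 0 < η c
      · have := hiff.mp hpos
        omega
      · have h1' : η c < 0 := by omega
        have : ¬ (0 < η c') := fun h => hpos (hiff.mpr h)
        omega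
    have himg : OFF.image φ ⊆ (Finset.univ : Finset Bool) ×ˢ
        (Finset.univ.filter (fun cc : ZMod 2 × ZMod 2 =>
          (d.1 : ZMod 2) * (cc.2 - (h1.2 : ZMod 2))
            - (d.2 : ZMod 2) * (cc.1 - (h1.1 : ZMod 2)) = 1)) := by
      intro y hy
      obtain ⟨c, hc, rfl⟩ := Finset.mem_image.mp hy
      obtain ⟨hcs, hcnz⟩ := Finset.mem_filter.mp hc
      refine Finset.mem_product.mpr ⟨Finset.mem_univ _, ?_⟩
      rw [Finset.mem_filter]
      refine ⟨Finset.mem_univ _, ?_⟩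
      have hnz : ((η c : ℤ) : ZMod 2) ≠ 0 :=
        fun h => hcnz (heven c (Finsupp.mem_support_iff.mp hcs) h)
      have h1v := hone _ hnz
      rw [hcast c] at h1v
      exact h1v
    have hc1 : OFF.card = (OFF.image φ).card := (Finset.card_image_of_injOn hinjφ).symm
    have hc2 := Finset.card_le_card himg
    have hc3 : ((Finset.univ : Finset Bool) ×ˢ
        (Finset.univ.filter (fun cc : ZMod 2 × ZMod 2 =>
          (d.1 : ZMod 2) * (cc.2 - (h1.2 : ZMod 2))
            - (d.2 : ZMod 2) * (cc.1 - (h1.1 : ZMod 2)) = 1))).card ≤ 4 := by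
      have hfc := fiber_card (d.1 : ZMod 2) (d.2 : ZMod 2) (h1.1 : ZMod 2) (h1.2 : ZMod 2)
        1 hdnz
      have hbu : (Finset.univ : Finset Bool).card = 2 := by decide
      rw [Finset.card_product, hbu]
      omega
    omega
  have hoffsum : ∑ a ∈ A.support.filter (fun a => ¬ η a = 0), A a ≤ 2 := by
    have hb := Finset.sum_le_card_nsmul (A.support.filter (fun a => ¬ η a = 0))
      (fun a => A a) (1/2 : ℝ) (fun x _ => hmax x)
    rw [nsmul_eq_mul] at hb
    have hcc : ((A.support.filter (fun a => ¬ η a = 0)).card : ℝ) ≤ 4 := by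
      exact_mod_cast hoffcard
    nlinarith
  have hsplit := Finset.sum_filter_add_sum_filter_not A.support (fun a => η a = 0)
    (fun a => A a)
  rw [hlen] at hsplit
  norm_num at hsplit honsum hoffsum
  linarith


end Stmt7

open Stmt7 in
/-- a good real sequence with the replacement-closure property whose
Σ¹_R(A) has no interior lattice point contains three affinely independent points of
multiplicity exactly 1/2. -/
theorem stmt7 (A : (ℤ × ℤ) →₀ ℝ)
    (hnonneg : ∀ a, 0 ≤ A a)
    (hlen : (∑ a ∈ A.support, A a) = 3.99)
    (hmax : ∀ a, A a ≤ 1 / 2)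
    (hline : ∀ q w : ℝ × ℝ, w ≠ 0 → lineMult A q w ≤ 3 / 2)
    (hrepl : ReplacementClosed A)
    (hnoint : ¬ ∃ x : ℤ × ℤ, toR2 x ∈ interior (sigmaR 1 A)) :
    ∃ a b c : ℤ × ℤ, A a = 1 / 2 ∧ A b = 1 / 2 ∧ A c = 1 / 2 ∧
      ¬ Collinear ℝ ({toR2 a, toR2 b, toR2 c} : Set (ℝ × ℝ)) :=
  Stmt7.stmt7_main A hnonneg hlen hmax hline hrepl hnoint

end
end
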